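/- arXiv:2012.03409 — 3 statements merged into one kernel-verified Lean document; each statement's English description precedes it below -/
import Mathlib

section
/- Let ν be an S-invariant probability measure on a subshift X, 0 < q < 1, and κ = ν ∗ B_{q,1−q}. If a word C of length n satisfies #₁C = max_{W ∈ L_n(X)} #₁W (i.e., C has the maximal number of ones among length-n words of X), then κ(C) = ν(C) · (1−q)^{#₁C}. -/
open Filter MeasureTheory

abbrev FullShift : Type := ℤ → Fin 2

def shift (x : FullShift) : FullShift := fun i => x (i + 1)

def cylinder {n : ℕ} (W : Fin n → Fin 2) : Set FullShift :=
  {x | ∀ i : Fin n, x ((i : ℕ) : ℤ) = W i}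

def ones {n : ℕ} (W : Fin n → Fin 2) : ℕ := (Finset.univ.filter fun i => W i = 1).card

def zeros {n : ℕ} (W : Fin n → Fin 2) : ℕ := (Finset.univ.filter fun i => W i = 0).card

noncomputable def birkhoff (φ : FullShift → ℝ) (n : ℕ) (x : FullShift) : ℝ :=
  ∑ i ∈ Finset.range n, φ (shift^[i] x)

def wordAt (x : FullShift) (n : ℕ) : Fin n → Fin 2 := fun i => x ((i : ℕ) : ℤ)

def hereditaryClosure (X : Set FullShift) : Set FullShift :=
  {y | ∃ x ∈ X, ∀ i : ℤ, y i ≤ x i}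

def Qmul (p : FullShift × FullShift) : FullShift := fun i => p.1 i * p.2 i

lemma measurableSet_cylinder {n : ℕ} (W : Fin n → Fin 2) : MeasurableSet (cylinder W) := by
  have h : cylinder W = ⋂ i : Fin n, (fun x : FullShift => x ((i:ℕ):ℤ)) ⁻¹' {W i} := by
    ext x; simp [_root_.cylinder]
  rw [h]
  exact MeasurableSet.iInter fun i => measurable_pi_apply _ (measurableSet_singleton _)

lemma measurable_Qmul : Measurable Qmul := by
  apply measurable_pi_lambda
  intro i
  exact ((measurable_pi_apply i).comp measurable_fst).mul
    ((measurable_pi_apply i).comp measurable_snd)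

lemma cylinder_eq_of_inter {n : ℕ} {V V' : Fin n → Fin 2}
    (h : (cylinder V ∩ cylinder V').Nonempty) : V = V' := by
  obtain ⟨x, hx, hx'⟩ := h
  funext i; rw [← hx i, ← hx' i]

lemma prod_g_eq {n : ℕ} (q : ℝ) (W : Fin n → Fin 2) :
    (∏ i : Fin n, if W i = 0 then q else 1 - q) = q ^ zeros W * (1-q) ^ ones W := by
  rw [Finset.prod_ite, Finset.prod_const, Finset.prod_const]
  have h2 : ∀ a : Fin 2, (¬ a = 0) ↔ a = 1 := by decide
  congr 2
  unfold ones
  congr 1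
  ext i
  simp [h2]

lemma comb_sum {n : ℕ} (q : ℝ) (C : Fin n → Fin 2) :
    ∑ W ∈ Fintype.piFinset
      (fun i => if C i = 1 then ({1} : Finset (Fin 2)) else Finset.univ),
      q ^ zeros W * (1-q) ^ ones W = (1-q) ^ ones C := by
  have key := Finset.prod_univ_sum
    (fun i : Fin n => if C i = 1 then ({1} : Finset (Fin 2)) else Finset.univ)
    (fun _ v => if v = 0 then q else 1 - q)
  simp only [← prod_g_eq] at *
  rw [← key]
  have : ∀ i : Fin n, (∑ j ∈ (if C i = 1 then ({1} : Finset (Fin 2)) else Finset.univ),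
      if j = 0 then q else 1 - q) = if C i = 1 then 1 - q else 1 := by
    intro i
    by_cases h : C i = 1
    · simp [h]
    · simp [h, Fin.sum_univ_succ]
  rw [Finset.prod_congr rfl (fun i _ => this i), Finset.prod_ite, Finset.prod_const,
    Finset.prod_const, one_pow, mul_one]
  rfl

theorem stmt5 (X : Set FullShift) (hcl : IsClosed X) (hne : X.Nonempty)
    (hinv : shift '' X = X)
    (ν B : Measure FullShift) [IsProbabilityMeasure ν] [IsProbabilityMeasure B]
    (hνinv : ν.map shift = ν) (hνX : ν X = 1)
    (q : ℝ) (hq0 : 0 < q) (hq1 : q < 1)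
    (hB : ∀ (n : ℕ) (W : Fin n → Fin 2),
      (B (cylinder W)).toReal = q ^ zeros W * (1 - q) ^ ones W)
    (n : ℕ) (C : Fin n → Fin 2) (hC : (X ∩ cylinder C).Nonempty)
    (hmax : ∀ W : Fin n → Fin 2, (X ∩ cylinder W).Nonempty → ones W ≤ ones C) :
    (((ν.prod B).map Qmul) (cylinder C)).toReal =
      (ν (cylinder C)).toReal * (1 - q) ^ ones C := by
  classical
  set μ := ν.prod B with hμ
  set s : Set (FullShift × FullShift) := Qmul ⁻¹' cylinder C with hs
  have hsmeas : MeasurableSet s := measurable_Qmul (measurableSet_cylinder C)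
  have hmap : ((ν.prod B).map Qmul) (cylinder C) = μ s :=
    Measure.map_apply measurable_Qmul (measurableSet_cylinder C)
  set T : ((Fin n → Fin 2) × (Fin n → Fin 2)) → Set (FullShift × FullShift) :=
    fun p => cylinder p.1 ×ˢ cylinder p.2 with hT
  have hTmeas : ∀ p, MeasurableSet (T p) := fun p =>
    (measurableSet_cylinder p.1).prod (measurableSet_cylinder p.2)
  -- cover
  have hcover : s = ⋃ p ∈ (Finset.univ : Finset ((Fin n → Fin 2) × (Fin n → Fin 2))),
      s ∩ T p := by
    ext z
    simp only [Set.mem_iUnion, Finset.mem_univ, Set.mem_inter_iff, exists_prop, true_and]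
    constructor
    · intro hz
      refine ⟨((fun i => z.1 ((i:ℕ):ℤ)), (fun i => z.2 ((i:ℕ):ℤ))), hz, ?_, ?_⟩ <;>
        exact fun i => rfl
    · rintro ⟨p, hz, -⟩; exact hz
  have hdisj : Set.PairwiseDisjoint
      (↑(Finset.univ : Finset ((Fin n → Fin 2) × (Fin n → Fin 2))))
      (fun p => s ∩ T p) := by
    intro p _ p' _ hpp'
    refine Set.disjoint_left.2 fun z hz hz' => hpp' ?_
    obtain ⟨-, h1, h2⟩ := hz
    obtain ⟨-, h1', h2'⟩ := hz'
    exact Prod.ext (cylinder_eq_of_inter ⟨z.1, h1, h1'⟩)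
      (cylinder_eq_of_inter ⟨z.2, h2, h2'⟩)
  have hsum : μ s = ∑ p : ((Fin n → Fin 2) × (Fin n → Fin 2)), μ (s ∩ T p) := by
    have h := measure_biUnion_finset (μ := μ) hdisj fun p _ => hsmeas.inter (hTmeas p)
    rw [← hcover] at h
    simpa using h
  -- value of each term
  have hterm : ∀ V W : Fin n → Fin 2, μ (s ∩ T (V, W)) =
      if (∀ i, V i * W i = C i) then ν (cylinder V) * B (cylinder W) else 0 := by
    intro V W
    by_cases h : ∀ i, V i * W i = C i
    · rw [if_pos h]
      have hsub : T (V, W) ⊆ s := by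
        rintro ⟨x, y⟩ ⟨hx, hy⟩
        intro i
        show x ((i:ℕ):ℤ) * y ((i:ℕ):ℤ) = C i
        rw [show x ((i:ℕ):ℤ) = V i from hx i, show y ((i:ℕ):ℤ) = W i from hy i, h i]
      rw [Set.inter_eq_right.2 hsub]
      exact Measure.prod_prod _ _
    · rw [if_neg h]
      push_neg at h
      obtain ⟨i, hi⟩ := h
      have : s ∩ T (V, W) = ∅ := by
        ext z
        simp only [Set.mem_empty_iff_false, iff_false, Set.mem_inter_iff, not_and]
        rintro hz ⟨h1, h2⟩
        refine hi ?_
        have e1 : z.1 ((i:ℕ):ℤ) = V i := h1 i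
        have e2 : z.2 ((i:ℕ):ℤ) = W i := h2 i
        rw [← e1, ← e2]
        exact hz i
      rw [this, measure_empty]
  -- take toReal
  rw [hmap, hsum, ENNReal.toReal_sum (fun p _ => measure_ne_top μ _)]
  have hre : ∀ p : ((Fin n → Fin 2) × (Fin n → Fin 2)), (μ (s ∩ T p)).toReal =
      if (∀ i, p.1 i * p.2 i = C i)
        then (ν (cylinder p.1)).toReal * (B (cylinder p.2)).toReal else 0 := by
    rintro ⟨V, W⟩
    rw [hterm V W]
    split
    · exact ENNReal.toReal_mul
    · simp
  rw [Finset.sum_congr rfl fun p _ => hre p, Fintype.sum_prod_type]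
  -- kill the V ≠ C terms
  have hzero : ∀ V : Fin n → Fin 2, V ≠ C →
      (∑ W : Fin n → Fin 2, if (∀ i, V i * W i = C i)
        then (ν (cylinder V)).toReal * (B (cylinder W)).toReal else 0) = 0 := by
    intro V hV
    refine Finset.sum_eq_zero fun W _ => ?_
    split
    · rename_i h
      -- V dominates C strictly, so ones V > ones C, so cylinder V misses X
      have hone : ∀ i, C i = 1 → V i = 1 := by
        intro i hi
        have := h i
        rw [hi] at this
        revert this
        have : ∀ a b : Fin 2, a * b = 1 → a = 1 := by decide
        exact this (V i) (W i)
      have hss : (Finset.univ.filter fun i => C i = 1) ⊂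
          (Finset.univ.filter fun i => V i = 1) := by
        refine Finset.ssubset_iff_of_subset ?_ |>.2 ?_
        · intro i hi
          simp only [Finset.mem_filter, Finset.mem_univ, true_and] at *
          exact hone i hi
        · have : ∃ i, V i ≠ C i := by
            by_contra hcon
            push_neg at hcon
            exact hV (funext hcon)
          obtain ⟨i, hi⟩ := this
          refine ⟨i, ?_, ?_⟩ <;> simp only [Finset.mem_filter, Finset.mem_univ, true_and]
          · revert hi; have : ∀ a b : Fin 2, a ≠ b → (b = 1 → a = 1) → a = 1 := by decide
            exact fun hi => this (V i) (C i) hi (hone i)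
          · intro hCi
            exact hi ((hone i hCi).trans hCi.symm)
      have hlt : ones C < ones V := Finset.card_lt_card hss
      have hXV : X ∩ cylinder V = ∅ := by
        by_contra hcon
        exact absurd (hmax V (Set.nonempty_iff_ne_empty.2 hcon)) (not_le.2 hlt)
      have hν0 : ν (cylinder V) = 0 := by
        have hsub : cylinder V ⊆ Xᶜ := by
          intro x hx hxX
          exact Set.eq_empty_iff_forall_notMem.1 hXV x ⟨hxX, hx⟩
        have hcompl : ν Xᶜ = 0 := by
          rw [measure_compl hcl.measurableSet (measure_ne_top ν X), hνX,
            measure_univ, tsub_self]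
        exact le_antisymm ((measure_mono hsub).trans hcompl.le) zero_le
      rw [hν0]
      simp
    · rfl
  rw [Finset.sum_eq_single_of_mem C (Finset.mem_univ C)
    (fun V _ hV => hzero V hV)]
  -- the V = C sum
  have hcond : ∀ W : Fin n → Fin 2, (∀ i, C i * W i = C i) ↔
      W ∈ Fintype.piFinset
        (fun i => if C i = 1 then ({1} : Finset (Fin 2)) else Finset.univ) := by
    intro W
    rw [Fintype.mem_piFinset]
    have h2 : ∀ a b : Fin 2, a * b = a ↔ (a = 1 → b = 1) := by decide
    constructor
    · intro h i
      by_cases hc : C i = 1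
      · simp [hc, (h2 (C i) (W i)).1 (h i) hc]
      · simp [hc]
    · intro h i
      refine (h2 (C i) (W i)).2 fun hc => ?_
      have := h i
      rw [if_pos hc] at this
      simpa using this
  calc (∑ W : Fin n → Fin 2, if (∀ i, C i * W i = C i)
        then (ν (cylinder C)).toReal * (B (cylinder W)).toReal else 0)
      = ∑ W ∈ Fintype.piFinset
          (fun i => if C i = 1 then ({1} : Finset (Fin 2)) else Finset.univ),
          (ν (cylinder C)).toReal * (B (cylinder W)).toReal := by
        have hfil : Finset.univ.filter (fun W : Fin n → Fin 2 => ∀ i, C i * W i = C i)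
            = Fintype.piFinset (fun i => if C i = 1 then ({1} : Finset (Fin 2)) else Finset.univ) := by
          ext W
          simp only [Finset.mem_filter, Finset.mem_univ, true_and]
          exact hcond W
        rw [← hfil, Finset.sum_filter]
    _ = (ν (cylinder C)).toReal * (1 - q) ^ ones C := by
        rw [← Finset.mul_sum]
        congr 1
        rw [Finset.sum_congr rfl fun W _ => hB n W]
        exact comb_sum q C
end

section
/- Let B ⊆ {2,3,…} and let M_B = ⋃_{b∈B} bℤ be the set of B-multiples. If B = {b₁,…,b_K} is finite, then for any residues r_k ∈ ℤ/b_kℤ (k = 1,…,K), the natural density of ⋃_{k=1}^K (b_kℤ + r_k) is at least the natural density of M_{{b₁,…,b_K}} = ⋃_{k=1}^K b_kℤ. -/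
open Finset


lemma ap_count (d P : ℕ) (hd : 0 < d) (hdP : d ∣ P) (v : ℤ) :
    (((Finset.Ico (0:ℤ) (P:ℤ)).filter (fun a => (d:ℤ) ∣ a - v)).card : ℤ) = (P / d : ℕ) := by
  have h1 : ((Finset.Ico (0:ℤ) (P:ℤ)).filter (fun a => (d:ℤ) ∣ a - v))
      = ((Finset.Ico (0:ℤ) (P:ℤ)).filter (fun a => a ≡ v [ZMOD (d:ℤ)])) := by
    apply Finset.filter_congr
    intro a _
    simp only [Int.modEq_iff_dvd, eq_iff_iff]
    constructor
    · intro h; exact (dvd_sub_comm).mp h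
    · intro h; exact (dvd_sub_comm).mp h
  rw [h1, Int.Ico_filter_modEq_card _ _ (by exact_mod_cast hd)]
  obtain ⟨c, rfl⟩ := hdP
  have hd' : (0:ℚ) < (d:ℚ) := by exact_mod_cast hd
  push_cast
  have h2 : ((d:ℚ)*(c:ℚ) - (v:ℚ))/(d:ℚ) = ((c:ℤ):ℚ) + ((-v:ℤ):ℚ)/(d:ℚ) := by
    push_cast; field_simp; ring
  rw [h2, add_comm, Int.ceil_add_intCast]
  have h4 : (0:ℚ) - (v:ℚ) = ((-v:ℤ):ℚ) := by push_cast; ring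
  rw [h4, Int.mul_ediv_cancel_left _ (by exact_mod_cast hd.ne' : (d:ℤ) ≠ 0)]
  omega

lemma dvd_iff_of_dvd_sub {d x y : ℤ} (h : d ∣ x - y) (r : ℤ) : d ∣ x - r ↔ d ∣ y - r := by
  constructor <;> intro h2
  · have h3 : d ∣ (x - r) - (x - y) := h2.sub h
    simpa [show (x - r) - (x - y) = y - r by ring] using h3
  · have h3 : d ∣ (y - r) + (x - y) := h2.add h
    simpa [show (y - r) + (x - y) = x - r by ring] using h3

lemma emod_self_sub_dvd (m : ℤ) (P : ℤ) : P ∣ m - m % P := by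
  have h := Int.mul_ediv_add_emod m P
  exact ⟨m / P, by linarith⟩

lemma crt_card (P Q : ℕ) (hP : 0 < P) (hQ : 0 < Q) (hco : Nat.Coprime P Q)
    (F : ℤ → Prop) [DecidablePred F] (G : ℤ → ℤ → Prop) [∀ a n, Decidable (G a n)]
    (hFG : ∀ m, F m ↔ G (m % (P:ℤ)) (m % (Q:ℤ))) :
    ((Finset.Ico (0:ℤ) ((P*Q : ℕ):ℤ)).filter F).card
      = ∑ n ∈ Finset.Ico (0:ℤ) (Q:ℤ), ((Finset.Ico (0:ℤ) (P:ℤ)).filter (fun a => G a n)).card := by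
  have hPz : (0:ℤ) < (P:ℤ) := by exact_mod_cast hP
  have hQz : (0:ℤ) < (Q:ℤ) := by exact_mod_cast hQ
  have hPL : (P:ℤ) ∣ ((P*Q:ℕ):ℤ) := by push_cast; exact Dvd.intro _ rfl
  have hQL : (Q:ℤ) ∣ ((P*Q:ℕ):ℤ) := by push_cast; exact Dvd.intro_left _ rfl
  have key : ((Finset.Ico (0:ℤ) ((P*Q:ℕ):ℤ)).filter F).card
      = (((Finset.Ico (0:ℤ) (P:ℤ)) ×ˢ (Finset.Ico (0:ℤ) (Q:ℤ))).filter (fun x => G x.1 x.2)).card := by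
    apply Finset.card_bij (fun m _ => (m % (P:ℤ), m % (Q:ℤ)))
    · intro m hm
      simp only [Finset.mem_filter, Finset.mem_product, Finset.mem_Ico] at *
      exact ⟨⟨⟨Int.emod_nonneg _ hPz.ne', Int.emod_lt_of_pos _ hPz⟩,
          ⟨Int.emod_nonneg _ hQz.ne', Int.emod_lt_of_pos _ hQz⟩⟩, (hFG m).mp hm.2⟩
    · intro m hm m' hm' he
      simp only [Finset.mem_filter, Finset.mem_Ico, Prod.mk.injEq] at *
      have h1 : (P:ℤ) ∣ m' - m := Int.ModEq.dvd (he.1 : m % (P:ℤ) = m' % (P:ℤ))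
      have h2 : (Q:ℤ) ∣ m' - m := Int.ModEq.dvd (he.2 : m % (Q:ℤ) = m' % (Q:ℤ))
      have hiso : IsCoprime (P:ℤ) (Q:ℤ) := by
        rw [Int.isCoprime_iff_gcd_eq_one]; exact_mod_cast hco
      have h3 : ((P*Q:ℕ):ℤ) ∣ m' - m := by push_cast; exact hiso.mul_dvd h1 h2
      have h4 : m % ((P*Q:ℕ):ℤ) = m' % ((P*Q:ℕ):ℤ) := (Int.modEq_iff_dvd).mpr h3
      rwa [Int.emod_eq_of_lt hm.1.1 hm.1.2, Int.emod_eq_of_lt hm'.1.1 hm'.1.2] at h4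
    · intro x hx
      simp only [Finset.mem_filter, Finset.mem_product, Finset.mem_Ico] at hx
      obtain ⟨⟨⟨ha0, haP⟩, ⟨hn0, hnQ⟩⟩, hG⟩ := hx
      have hiso : IsCoprime (P:ℤ) (Q:ℤ) := by
        rw [Int.isCoprime_iff_gcd_eq_one]; exact_mod_cast hco
      obtain ⟨u, w, huw⟩ := hiso
      set m0 : ℤ := x.2 * (u * P) + x.1 * (w * Q) with hm0
      set L : ℤ := ((P*Q : ℕ):ℤ) with hL
      have hLz : (0:ℤ) < L := by rw [hL]; push_cast; positivity
      have hmP : (m0 % L) % (P:ℤ) = x.1 := by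
        rw [Int.emod_emod_of_dvd _ hPL]
        have hdv : (P:ℤ) ∣ m0 - x.1 := ⟨x.2 * u - x.1 * u, by linear_combination x.1 * huw⟩
        have : x.1 % (P:ℤ) = m0 % (P:ℤ) := (Int.modEq_iff_dvd).mpr hdv
        rw [← this, Int.emod_eq_of_lt ha0 haP]
      have hmQ : (m0 % L) % (Q:ℤ) = x.2 := by
        rw [Int.emod_emod_of_dvd _ hQL]
        have hdv : (Q:ℤ) ∣ m0 - x.2 := ⟨x.1 * w - x.2 * w, by linear_combination x.2 * huw⟩
        have : x.2 % (Q:ℤ) = m0 % (Q:ℤ) := (Int.modEq_iff_dvd).mpr hdv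
        rw [← this, Int.emod_eq_of_lt hn0 hnQ]
      refine ⟨m0 % L, ?_, ?_⟩
      · simp only [Finset.mem_filter, Finset.mem_Ico]
        refine ⟨⟨Int.emod_nonneg _ hLz.ne', Int.emod_lt_of_pos _ hLz⟩, ?_⟩
        rw [hFG, hmP, hmQ]
        exact hG
      · rw [hmP, hmQ]
  rw [key, Finset.card_filter, Finset.sum_product_right]
  congr 1
  ext n
  rw [Finset.card_filter]

open Classical in
lemma core : ∀ Q : ℕ, 0 < Q → ∀ K : ℕ, ∀ s : Finset (Fin K), ∀ b : Fin K → ℕ,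
    (∀ k ∈ s, 0 < b k ∧ b k ∣ Q) → ∀ r : Fin K → ℤ,
    ((Finset.Ico (0:ℤ) (Q:ℤ)).filter (fun m => ∃ k ∈ s, (b k:ℤ) ∣ m)).card
      ≤ ((Finset.Ico (0:ℤ) (Q:ℤ)).filter (fun m => ∃ k ∈ s, (b k:ℤ) ∣ m - r k)).card := by
  intro Q
  induction Q using Nat.strong_induction_on with
  | _ Q IH =>
  intro hQ K s b hb r
  rcases eq_or_lt_of_le (show 1 ≤ Q from hQ) with h1 | h2
  · -- Q = 1
    apply Finset.card_le_card
    intro m hm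
    simp only [Finset.mem_filter] at *
    obtain ⟨hm1, k, hk, hdvd⟩ := hm
    refine ⟨hm1, k, hk, ?_⟩
    have hbk := (hb k hk).2
    rw [← h1] at hbk
    have : b k = 1 := Nat.eq_one_of_dvd_one hbk
    rw [this]; exact one_dvd _
  · -- Q ≥ 2
    set p := Q.minFac with hp
    have hpp : p.Prime := Nat.minFac_prime (by omega)
    have hpQ : p ∣ Q := Nat.minFac_dvd Q
    set e := Q.factorization p with he
    set P := p ^ e with hP
    set Q' := Q / P with hQ'
    have hQne : Q ≠ 0 := by omega
    have hPdvd : P ∣ Q := Nat.ordProj_dvd Q p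
    have hQeq : Q = P * Q' := by rw [hQ', Nat.mul_div_cancel' hPdvd]
    have hpQ' : ¬ p ∣ Q' := Nat.not_dvd_ordCompl hpp hQne
    have hQ'pos : 0 < Q' := Nat.ordCompl_pos p hQne
    have hepos : 0 < e := hpp.factorization_pos_of_dvd hQne hpQ
    have hPone : 1 < P := Nat.one_lt_pow hepos.ne' hpp.one_lt
    have hQ'lt : Q' < Q := Nat.div_lt_self hQ hPone
    have hPpos : 0 < P := by omega
    have hcoPQ' : Nat.Coprime P Q' := Nat.Coprime.pow_left _ (Nat.coprime_ordCompl hpp hQne)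
    -- data for each k
    set v : Fin K → ℕ := fun k => (b k).factorization p with hv
    set c : Fin K → ℕ := fun k => b k / p ^ (v k) with hc
    have hbk : ∀ k ∈ s, b k = p ^ (v k) * c k := fun k hk =>
      (Nat.ordProj_mul_ordCompl_eq_self (b k) p).symm
    have hvle : ∀ k ∈ s, v k ≤ e := by
      intro k hk
      have := (Nat.factorization_le_iff_dvd (hb k hk).1.ne' hQne).mpr (hb k hk).2
      exact this p
    have hcdvd : ∀ k ∈ s, c k ∣ Q' := by
      intro k hk
      have h1 : c k ∣ Q := dvd_trans (Nat.ordCompl_dvd (b k) p) (hb k hk).2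
      have h2 : ¬ p ∣ c k := Nat.not_dvd_ordCompl hpp (hb k hk).1.ne'
      exact Nat.dvd_ordCompl_of_dvd_not_dvd h1 h2
    have hcpos : ∀ k ∈ s, 0 < c k := fun k hk => Nat.ordCompl_pos p (hb k hk).1.ne'
    have hsplit : ∀ k ∈ s, ∀ x : ℤ,
        ((b k:ℤ) ∣ x ↔ ((p ^ (v k) : ℕ):ℤ) ∣ x ∧ ((c k : ℕ):ℤ) ∣ x) := by
      intro k hk x
      have hco : Nat.Coprime (p ^ (v k)) (c k) :=
        Nat.Coprime.pow_left _ (Nat.coprime_ordCompl hpp (hb k hk).1.ne')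
      have hico : IsCoprime ((p ^ (v k) : ℕ):ℤ) ((c k : ℕ):ℤ) := by
        rw [Int.isCoprime_iff_gcd_eq_one, Int.gcd_natCast_natCast]
        exact hco
      constructor
      · intro h
        have hbeq : (b k : ℤ) = ((p ^ (v k) : ℕ):ℤ) * ((c k : ℕ):ℤ) := by
          rw [← Nat.cast_mul, ← hbk k hk]
        rw [hbeq] at h
        exact ⟨dvd_trans (Dvd.intro _ rfl) h, dvd_trans (Dvd.intro_left _ rfl) h⟩
      · rintro ⟨h1, h2⟩
        have := hico.mul_dvd h1 h2
        rwa [← Nat.cast_mul, ← hbk k hk] at this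
    have hpkP : ∀ k ∈ s, ((p ^ (v k) : ℕ):ℤ) ∣ ((P:ℕ):ℤ) := by
      intro k hk
      exact_mod_cast Int.natCast_dvd_natCast.mpr (pow_dvd_pow p (hvle k hk))
    -- the shifted side via CRT
    have hcast : ((Q:ℕ):ℤ) = ((P * Q' : ℕ):ℤ) := by rw [← hQeq]
    have hshift_eq : ((Finset.Ico (0:ℤ) (Q:ℤ)).filter (fun m => ∃ k ∈ s, (b k:ℤ) ∣ m - r k)).card
        = ∑ n ∈ Finset.Ico (0:ℤ) (Q':ℤ), ((Finset.Ico (0:ℤ) (P:ℤ)).filter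
            (fun a => ∃ k ∈ s, ((p ^ (v k):ℕ):ℤ) ∣ a - r k ∧ ((c k:ℕ):ℤ) ∣ n - r k)).card := by
      rw [hcast]
      apply crt_card P Q' hPpos hQ'pos hcoPQ'
      intro m
      constructor
      · rintro ⟨k, hk, hd⟩
        rw [hsplit k hk] at hd
        exact ⟨k, hk, (dvd_iff_of_dvd_sub (dvd_trans (hpkP k hk) (emod_self_sub_dvd m _)) _).mp hd.1,
          (dvd_iff_of_dvd_sub (dvd_trans (Int.natCast_dvd_natCast.mpr (hcdvd k hk)) (emod_self_sub_dvd m _)) _).mp hd.2⟩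
      · rintro ⟨k, hk, hd1, hd2⟩
        refine ⟨k, hk, (hsplit k hk _).mpr ⟨?_, ?_⟩⟩
        · exact (dvd_iff_of_dvd_sub (dvd_trans (hpkP k hk) (emod_self_sub_dvd m _)) _).mpr hd1
        · exact (dvd_iff_of_dvd_sub (dvd_trans (Int.natCast_dvd_natCast.mpr (hcdvd k hk)) (emod_self_sub_dvd m _)) _).mpr hd2
    have hzero_eq : ((Finset.Ico (0:ℤ) (Q:ℤ)).filter (fun m => ∃ k ∈ s, (b k:ℤ) ∣ m)).card
        = ∑ n ∈ Finset.Ico (0:ℤ) (Q':ℤ), ((Finset.Ico (0:ℤ) (P:ℤ)).filter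
            (fun a => ∃ k ∈ s, ((p ^ (v k):ℕ):ℤ) ∣ a ∧ ((c k:ℕ):ℤ) ∣ n)).card := by
      rw [hcast]
      apply crt_card P Q' hPpos hQ'pos hcoPQ'
      intro m
      constructor
      · rintro ⟨k, hk, hd⟩
        rw [hsplit k hk] at hd
        refine ⟨k, hk, ?_, ?_⟩
        · have := (dvd_iff_of_dvd_sub (dvd_trans (hpkP k hk) (emod_self_sub_dvd m _)) 0).mp (by simpa using hd.1)
          simpa using this
        · have := (dvd_iff_of_dvd_sub (dvd_trans (Int.natCast_dvd_natCast.mpr (hcdvd k hk)) (emod_self_sub_dvd m _)) 0).mp (by simpa using hd.2)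
          simpa using this
      · rintro ⟨k, hk, hd1, hd2⟩
        refine ⟨k, hk, (hsplit k hk _).mpr ⟨?_, ?_⟩⟩
        · have := (dvd_iff_of_dvd_sub (dvd_trans (hpkP k hk) (emod_self_sub_dvd m _)) 0).mpr (by simpa using hd1)
          simpa using this
        · have := (dvd_iff_of_dvd_sub (dvd_trans (Int.natCast_dvd_natCast.mpr (hcdvd k hk)) (emod_self_sub_dvd m _)) 0).mpr (by simpa using hd2)
          simpa using this
    rw [hshift_eq, hzero_eq]
    set T : ℤ → Finset ℕ := fun n => (Finset.range P).filter
      (fun t => ∃ k ∈ s.filter (fun k' => t < p ^ (e - v k')), (c k:ℤ) ∣ n - r k) with hT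
    set T0 : ℤ → Finset ℕ := fun n => (Finset.range P).filter
      (fun t => ∃ k ∈ s.filter (fun k' => t < p ^ (e - v k')), (c k:ℤ) ∣ n) with hT0
    have hwleP : ∀ k ∈ s, p ^ (e - v k) ≤ P := by
      intro k hk
      exact Nat.pow_le_pow_right hpp.pos (Nat.sub_le _ _)
    have hapP : ∀ (k : Fin K), k ∈ s → ∀ ρ : ℤ,
        ((Finset.Ico (0:ℤ) (P:ℤ)).filter (fun a => ((p ^ (v k):ℕ):ℤ) ∣ a - ρ)).card
          = p ^ (e - v k) := by
      intro k hk ρ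
      have h1 := ap_count (p ^ (v k)) P (pow_pos hpp.pos _) (pow_dvd_pow p (hvle k hk)) ρ
      have h2 : P / p ^ (v k) = p ^ (e - v k) := by
        rw [hP, Nat.pow_div (hvle k hk) hpp.pos]
      rw [h2] at h1
      exact_mod_cast h1
    -- Claim B : zero pointwise
    have claimB : ∀ n : ℤ, ((Finset.Ico (0:ℤ) (P:ℤ)).filter
        (fun a => ∃ k ∈ s, ((p ^ (v k):ℕ):ℤ) ∣ a ∧ ((c k:ℕ):ℤ) ∣ n)).card ≤ (T0 n).card := by
      intro n
      by_cases hS : ∃ k ∈ s, (c k:ℤ) ∣ n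
      · obtain ⟨k1, hk1, hck1⟩ := hS
        set S0 := s.filter (fun k => (c k:ℤ) ∣ n) with hS0
        have hne : S0.Nonempty := ⟨k1, Finset.mem_filter.mpr ⟨hk1, hck1⟩⟩
        obtain ⟨k0, hk0S, hmin⟩ := Finset.exists_min_image S0 v hne
        have hk0s : k0 ∈ s := (Finset.mem_filter.mp hk0S).1
        have hk0n : (c k0:ℤ) ∣ n := (Finset.mem_filter.mp hk0S).2
        calc ((Finset.Ico (0:ℤ) (P:ℤ)).filter
            (fun a => ∃ k ∈ s, ((p ^ (v k):ℕ):ℤ) ∣ a ∧ ((c k:ℕ):ℤ) ∣ n)).card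
            ≤ ((Finset.Ico (0:ℤ) (P:ℤ)).filter (fun a => ((p ^ (v k0):ℕ):ℤ) ∣ a - 0)).card := by
              apply Finset.card_le_card
              intro a ha
              simp only [Finset.mem_filter] at *
              obtain ⟨haI, k, hk, h1, h2⟩ := ha
              refine ⟨haI, ?_⟩
              rw [sub_zero]
              have hv0 : v k0 ≤ v k := hmin k (Finset.mem_filter.mpr ⟨hk, h2⟩)
              exact dvd_trans (by exact_mod_cast Int.natCast_dvd_natCast.mpr (pow_dvd_pow p hv0)) h1
          _ = p ^ (e - v k0) := hapP k0 hk0s 0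
          _ ≤ (T0 n).card := by
              have hsub : Finset.range (p ^ (e - v k0)) ⊆ T0 n := by
                intro t ht
                simp only [Finset.mem_range] at ht
                simp only [hT0, Finset.mem_filter, Finset.mem_range]
                exact ⟨lt_of_lt_of_le ht (hwleP k0 hk0s), k0, ⟨hk0s, ht⟩, hk0n⟩
              simpa using Finset.card_le_card hsub
      · have hempty : ((Finset.Ico (0:ℤ) (P:ℤ)).filter
            (fun a => ∃ k ∈ s, ((p ^ (v k):ℕ):ℤ) ∣ a ∧ ((c k:ℕ):ℤ) ∣ n)) = ∅ := by
          apply Finset.filter_false_of_mem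
          rintro a _ ⟨k, hk, h1, h2⟩
          exact hS ⟨k, hk, h2⟩
        rw [hempty]
        simp
    -- Claim A : shifted pointwise
    have claimA : ∀ n : ℤ, (T n).card ≤ ((Finset.Ico (0:ℤ) (P:ℤ)).filter
        (fun a => ∃ k ∈ s, ((p ^ (v k):ℕ):ℤ) ∣ a - r k ∧ ((c k:ℕ):ℤ) ∣ n - r k)).card := by
      intro n
      by_cases hS : ∃ k ∈ s, (c k:ℤ) ∣ n - r k
      · obtain ⟨k1, hk1, hck1⟩ := hS
        set S1 := s.filter (fun k => (c k:ℤ) ∣ n - r k) with hS1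
        have hne : S1.Nonempty := ⟨k1, Finset.mem_filter.mpr ⟨hk1, hck1⟩⟩
        obtain ⟨k0, hk0S, hmin⟩ := Finset.exists_min_image S1 v hne
        have hk0s : k0 ∈ s := (Finset.mem_filter.mp hk0S).1
        have hk0n : (c k0:ℤ) ∣ n - r k0 := (Finset.mem_filter.mp hk0S).2
        calc (T n).card ≤ (Finset.range (p ^ (e - v k0))).card := by
              apply Finset.card_le_card
              intro t ht
              simp only [hT, Finset.mem_filter, Finset.mem_range] at ht
              obtain ⟨htP, k, hkf, hck⟩ := ht
              obtain ⟨hks, htk⟩ := hkf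
              have hv0 : v k0 ≤ v k := hmin k (Finset.mem_filter.mpr ⟨hks, hck⟩)
              have : p ^ (e - v k) ≤ p ^ (e - v k0) :=
                Nat.pow_le_pow_right hpp.pos (by omega)
              exact Finset.mem_range.mpr (lt_of_lt_of_le htk this)
          _ = p ^ (e - v k0) := Finset.card_range _
          _ ≤ _ := by
              rw [← hapP k0 hk0s (r k0)]
              apply Finset.card_le_card
              intro a ha
              simp only [Finset.mem_filter] at *
              exact ⟨ha.1, k0, hk0s, ha.2, hk0n⟩
      · have hempty : T n = ∅ := by
          apply Finset.filter_false_of_mem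
          rintro t _ ⟨k, hkf, h2⟩
          exact hS ⟨k, (Finset.mem_filter.mp hkf).1, h2⟩
        rw [hempty]
        simp
    -- Claim C : compare the middle sums via IH
    have claimC : ∑ n ∈ Finset.Ico (0:ℤ) (Q':ℤ), (T0 n).card
        ≤ ∑ n ∈ Finset.Ico (0:ℤ) (Q':ℤ), (T n).card := by
      have e0 : ∑ n ∈ Finset.Ico (0:ℤ) (Q':ℤ), (T0 n).card
          = ∑ t ∈ Finset.range P, ((Finset.Ico (0:ℤ) (Q':ℤ)).filter
              (fun n => ∃ k ∈ s.filter (fun k' => t < p ^ (e - v k')), (c k:ℤ) ∣ n)).card := by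
        simp only [hT0]
        simp_rw [Finset.card_filter]
        rw [Finset.sum_comm]
      have e1 : ∑ n ∈ Finset.Ico (0:ℤ) (Q':ℤ), (T n).card
          = ∑ t ∈ Finset.range P, ((Finset.Ico (0:ℤ) (Q':ℤ)).filter
              (fun n => ∃ k ∈ s.filter (fun k' => t < p ^ (e - v k')), (c k:ℤ) ∣ n - r k)).card := by
        simp only [hT]
        simp_rw [Finset.card_filter]
        rw [Finset.sum_comm]
      rw [e0, e1]
      apply Finset.sum_le_sum
      intro t _
      exact IH Q' hQ'lt hQ'pos K (s.filter (fun k' => t < p ^ (e - v k'))) c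
        (fun k hk => ⟨hcpos k (Finset.mem_filter.mp hk).1, hcdvd k (Finset.mem_filter.mp hk).1⟩) r
    calc ∑ n ∈ Finset.Ico (0:ℤ) (Q':ℤ), ((Finset.Ico (0:ℤ) (P:ℤ)).filter
            (fun a => ∃ k ∈ s, ((p ^ (v k):ℕ):ℤ) ∣ a ∧ ((c k:ℕ):ℤ) ∣ n)).card
        ≤ ∑ n ∈ Finset.Ico (0:ℤ) (Q':ℤ), (T0 n).card := Finset.sum_le_sum (fun n _ => claimB n)
      _ ≤ ∑ n ∈ Finset.Ico (0:ℤ) (Q':ℤ), (T n).card := claimC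
      _ ≤ _ := Finset.sum_le_sum (fun n _ => claimA n)

open Filter

lemma window_count (L : ℕ) (hL : 0 < L) (F : ℤ → Prop) [DecidablePred F]
    (hper : ∀ m t : ℤ, (L:ℤ) ∣ t → (F (m + t) ↔ F m)) (a : ℤ) :
    ((Finset.Ico a (a + (L:ℤ))).filter F).card = ((Finset.Ico (0:ℤ) (L:ℤ)).filter F).card := by
  have hLz : (0:ℤ) < (L:ℤ) := by exact_mod_cast hL
  apply Finset.card_bij (fun m _ => m % (L:ℤ))
  · intro m hm
    simp only [Finset.mem_filter, Finset.mem_Ico] at *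
    refine ⟨⟨Int.emod_nonneg _ hLz.ne', Int.emod_lt_of_pos _ hLz⟩, ?_⟩
    have h1 : (L:ℤ) ∣ m - m % L := emod_self_sub_dvd m _
    have := hper (m % L) (m - m % L) h1
    rw [show m % L + (m - m % L) = m by ring] at this
    exact this.mp hm.2
  · intro m hm m' hm' he
    simp only [Finset.mem_filter, Finset.mem_Ico] at hm hm'
    have h1 : (L:ℤ) ∣ m' - m := Int.ModEq.dvd (he : m % (L:ℤ) = m' % (L:ℤ))
    have h2 : (m - a) % L = (m' - a) % L := by
      apply Int.ModEq.sub_right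
      exact (Int.modEq_iff_dvd).mpr h1
    rw [Int.emod_eq_of_lt (by omega) (by omega), Int.emod_eq_of_lt (by omega) (by omega)] at h2
    omega
  · intro x hx
    simp only [Finset.mem_filter, Finset.mem_Ico] at hx
    refine ⟨a + (x - a) % L, ?_, ?_⟩
    · simp only [Finset.mem_filter, Finset.mem_Ico]
      have h0 := Int.emod_nonneg (x - a) hLz.ne'
      have h1 := Int.emod_lt_of_pos (x - a) hLz
      refine ⟨⟨by omega, by omega⟩, ?_⟩
      have hd : (L:ℤ) ∣ (a + (x - a) % L) - x := by
        have : (L:ℤ) ∣ (x - a) - (x - a) % L := emod_self_sub_dvd _ _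
        have h3 : (a + (x - a) % L) - x = -((x - a) - (x - a) % L) := by ring
        rw [h3]
        exact dvd_neg.mpr this
      have := hper x ((a + (x - a) % L) - x) hd
      rw [show x + ((a + (x - a) % L) - x) = a + (x - a) % L by ring] at this
      exact this.mpr hx.2
    · have hd : (L:ℤ) ∣ (a + (x - a) % L) - x := by
        have : (L:ℤ) ∣ (x - a) - (x - a) % L := emod_self_sub_dvd _ _
        have h3 : (a + (x - a) % L) - x = -((x - a) - (x - a) % L) := by ring
        rw [h3]
        exact dvd_neg.mpr this
      have : (a + (x - a) % L) % L = x % L := Int.modEq_iff_dvd.mpr (by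
        rw [show x - (a + (x - a) % L) = -((a + (x - a) % L) - x) by ring]
        exact dvd_neg.mpr hd)
      rw [this, Int.emod_eq_of_lt hx.1.1 hx.1.2]

lemma block_count (L : ℕ) (hL : 0 < L) (F : ℤ → Prop) [DecidablePred F]
    (hper : ∀ m t : ℤ, (L:ℤ) ∣ t → (F (m + t) ↔ F m)) (q : ℕ) :
    ((Finset.Ico (1:ℤ) (1 + (q:ℤ) * L)).filter F).card
      = q * ((Finset.Ico (0:ℤ) (L:ℤ)).filter F).card := by
  induction q with
  | zero => simp
  | succ q ih =>
    have hsplit : Finset.Ico (1:ℤ) (1 + ((q+1:ℕ):ℤ) * L)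
        = Finset.Ico (1:ℤ) (1 + (q:ℤ) * L) ∪ Finset.Ico (1 + (q:ℤ) * L) ((1 + (q:ℤ) * L) + L) := by
      rw [Finset.Ico_union_Ico_eq_Ico]
      · congr 1
        push_cast
        ring
      · have : (0:ℤ) ≤ (q:ℤ) * L := by positivity
        omega
      · have hLz : (0:ℤ) < (L:ℤ) := by exact_mod_cast hL
        omega
    rw [hsplit, Finset.filter_union, Finset.card_union_of_disjoint, ih,
      window_count L hL F hper (1 + (q:ℤ) * L)]
    · ring
    · exact Finset.disjoint_filter_filter (Finset.Ico_disjoint_Ico_consecutive _ _ _)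

lemma nat_lt_div_succ_mul (N L : ℕ) (hL : 0 < L) : N < (N / L + 1) * L := by
  have h0 := Nat.div_add_mod N L
  have h1 := Nat.mod_lt N hL
  calc N = L * (N / L) + N % L := h0.symm
    _ < L * (N / L) + L := Nat.add_lt_add_left h1 _
    _ = (N / L + 1) * L := by ring

lemma floor_div_tendsto (L : ℕ) (hL : 0 < L) :
    Tendsto (fun N : ℕ => ((N / L : ℕ) : ℝ) / N) atTop (nhds (1 / L)) := by
  have hLr : (0:ℝ) < L := by exact_mod_cast hL
  apply tendsto_of_tendsto_of_tendsto_of_le_of_le' (g := fun N : ℕ => 1 / (L:ℝ) - 1 / N)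
    (h := fun _ => (1:ℝ) / L)
  · have : Tendsto (fun N : ℕ => 1 / (N:ℝ)) atTop (nhds 0) := tendsto_one_div_atTop_nhds_zero_nat
    have h2 := (tendsto_const_nhds (x := 1 / (L:ℝ)) (f := atTop)).sub this
    simpa using h2
  · exact tendsto_const_nhds
  · filter_upwards [eventually_ge_atTop 1] with N hN
    have hNr : (0:ℝ) < N := by exact_mod_cast hN
    have h1 : N < (N / L + 1) * L := nat_lt_div_succ_mul N L hL
    have h1r : (N:ℝ) < ((N / L : ℕ) + 1) * L := by exact_mod_cast h1
    rw [div_sub_div _ _ hLr.ne' hNr.ne', div_le_div_iff₀ (by positivity) hNr]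
    have hq : (0:ℝ) ≤ ((N / L : ℕ) : ℝ) := by positivity
    nlinarith
  · filter_upwards [eventually_ge_atTop 1] with N hN
    have hNr : (0:ℝ) < N := by exact_mod_cast hN
    have h1 : (N / L) * L ≤ N := Nat.div_mul_le_self N L
    have h1r : ((N / L : ℕ) : ℝ) * L ≤ N := by exact_mod_cast h1
    rw [div_le_div_iff₀ hNr hLr]
    nlinarith

lemma density_limit (L : ℕ) (hL : 0 < L) (F : ℤ → Prop) [DecidablePred F]
    (hper : ∀ m t : ℤ, (L:ℤ) ∣ t → (F (m + t) ↔ F m)) :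
    Tendsto (fun N : ℕ => (((Finset.Icc (1:ℤ) (N:ℤ)).filter F).card : ℝ) / N) atTop
      (nhds ((((Finset.Ico (0:ℤ) (L:ℤ)).filter F).card : ℝ) / L)) := by
  set c := ((Finset.Ico (0:ℤ) (L:ℤ)).filter F).card with hc
  have hLr : (0:ℝ) < L := by exact_mod_cast hL
  have hbound : ∀ N : ℕ, (N / L) * c ≤ ((Finset.Icc (1:ℤ) (N:ℤ)).filter F).card
      ∧ ((Finset.Icc (1:ℤ) (N:ℤ)).filter F).card ≤ (N / L + 1) * c := by
    intro N
    set q := N / L with hq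
    have hqL : q * L ≤ N := Nat.div_mul_le_self N L
    have hqL2 : N < (q + 1) * L := nat_lt_div_succ_mul N L hL
    have hIcc : Finset.Icc (1:ℤ) (N:ℤ) = Finset.Ico (1:ℤ) ((N:ℤ) + 1) := by
      ext x
      simp only [Finset.mem_Icc, Finset.mem_Ico]
      omega
    constructor
    · rw [← block_count L hL F hper q, hIcc]
      apply Finset.card_le_card
      apply Finset.filter_subset_filter
      apply Finset.Ico_subset_Ico le_rfl
      push_cast
      exact_mod_cast by omega
    · rw [← block_count L hL F hper (q+1), hIcc]
      apply Finset.card_le_card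
      apply Finset.filter_subset_filter
      apply Finset.Ico_subset_Ico le_rfl
      push_cast
      exact_mod_cast by omega
  apply tendsto_of_tendsto_of_tendsto_of_le_of_le'
    (g := fun N : ℕ => ((N / L : ℕ) : ℝ) * c / N)
    (h := fun N : ℕ => (((N / L : ℕ) : ℝ) + 1) * c / N)
  · have h1 := (floor_div_tendsto L hL).mul_const (c:ℝ)
    have h2 : (1:ℝ) / L * c = c / L := by ring
    rw [h2] at h1
    apply h1.congr
    intro N
    ring
  · have h1 := (floor_div_tendsto L hL).mul_const (c:ℝ)
    have h3 := tendsto_one_div_atTop_nhds_zero_nat.mul_const (c:ℝ)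
    have h4 := h1.add h3
    have h5 : Tendsto (fun N : ℕ => (((N / L : ℕ) : ℝ) + 1) * c / N) atTop
        (nhds (1/(L:ℝ)*c + 0*c)) := by
      apply h4.congr
      intro N
      by_cases hN : (N:ℝ) = 0
      · simp [hN]
      · field_simp
    have h6 : 1/(L:ℝ)*c + 0*c = (c:ℝ)/L := by ring
    rwa [h6] at h5
  · filter_upwards [eventually_ge_atTop 1] with N hN
    have hNr : (0:ℝ) < N := by exact_mod_cast hN
    have hbr : ((N / L : ℕ) : ℝ) * c ≤ (((Finset.Icc (1:ℤ) (N:ℤ)).filter F).card : ℝ) := by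
      exact_mod_cast (hbound N).1
    gcongr
  · filter_upwards [eventually_ge_atTop 1] with N hN
    have hNr : (0:ℝ) < N := by exact_mod_cast hN
    have hbr : (((Finset.Icc (1:ℤ) (N:ℤ)).filter F).card : ℝ) ≤ (((N / L : ℕ) : ℝ) + 1) * c := by
      exact_mod_cast (hbound N).2
    gcongr

open Classical in
theorem stmt10 (K : ℕ) (hK : 1 ≤ K) (b : Fin K → ℕ) (hb : ∀ k, 2 ≤ b k)
    (r : Fin K → ℤ) :
    ∃ dA dM : ℝ,
      Tendsto (fun N : ℕ =>
          (((Finset.Icc (1 : ℤ) N).filter fun m => ∃ k, (b k : ℤ) ∣ (m - r k)).card : ℝ) / N)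
        atTop (nhds dA) ∧
      Tendsto (fun N : ℕ =>
          (((Finset.Icc (1 : ℤ) N).filter fun m => ∃ k, (b k : ℤ) ∣ m).card : ℝ) / N)
        atTop (nhds dM) ∧
      dM ≤ dA := by
  have hLpos : 0 < ∏ k, b k := Finset.prod_pos (fun k _ => by have := hb k; omega)
  set L : ℕ := ∏ k, b k with hLdef
  have hdvd : ∀ k, b k ∣ L := fun k => Finset.dvd_prod_of_mem b (Finset.mem_univ k)
  have hdvdz : ∀ k, (b k : ℤ) ∣ (L:ℤ) := fun k => Int.natCast_dvd_natCast.mpr (hdvd k)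
  have hperA : ∀ m t : ℤ, (L:ℤ) ∣ t →
      ((∃ k, (b k:ℤ) ∣ (m + t) - r k) ↔ (∃ k, (b k:ℤ) ∣ m - r k)) := by
    intro m t ht
    have key : ∀ k, ((b k:ℤ) ∣ (m + t) - r k ↔ (b k:ℤ) ∣ m - r k) := by
      intro k
      have hbt : (b k:ℤ) ∣ (m + t) - m := by
        rw [show (m + t) - m = t by ring]
        exact dvd_trans (hdvdz k) ht
      exact dvd_iff_of_dvd_sub hbt (r k)
    exact ⟨fun ⟨k, hk⟩ => ⟨k, (key k).mp hk⟩, fun ⟨k, hk⟩ => ⟨k, (key k).mpr hk⟩⟩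
  have hperM : ∀ m t : ℤ, (L:ℤ) ∣ t →
      ((∃ k, (b k:ℤ) ∣ (m + t)) ↔ (∃ k, (b k:ℤ) ∣ m)) := by
    intro m t ht
    have key : ∀ k, ((b k:ℤ) ∣ (m + t) ↔ (b k:ℤ) ∣ m) := by
      intro k
      have hbt : (b k:ℤ) ∣ (m + t) - m := by
        rw [show (m + t) - m = t by ring]
        exact dvd_trans (hdvdz k) ht
      have := dvd_iff_of_dvd_sub hbt 0
      simpa using this
    exact ⟨fun ⟨k, hk⟩ => ⟨k, (key k).mp hk⟩, fun ⟨k, hk⟩ => ⟨k, (key k).mpr hk⟩⟩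
  refine ⟨(((Finset.Ico (0:ℤ) (L:ℤ)).filter (fun m => ∃ k, (b k:ℤ) ∣ m - r k)).card : ℝ) / L,
      (((Finset.Ico (0:ℤ) (L:ℤ)).filter (fun m => ∃ k, (b k:ℤ) ∣ m)).card : ℝ) / L,
      density_limit L hLpos _ hperA, density_limit L hLpos _ hperM, ?_⟩
  have h1 : ((Finset.Ico (0:ℤ) (L:ℤ)).filter (fun m => ∃ k, (b k:ℤ) ∣ m))
      = ((Finset.Ico (0:ℤ) (L:ℤ)).filter (fun m => ∃ k ∈ Finset.univ, (b k:ℤ) ∣ m)) := by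
    ext m; simp
  have h2 : ((Finset.Ico (0:ℤ) (L:ℤ)).filter (fun m => ∃ k, (b k:ℤ) ∣ m - r k))
      = ((Finset.Ico (0:ℤ) (L:ℤ)).filter (fun m => ∃ k ∈ Finset.univ, (b k:ℤ) ∣ m - r k)) := by
    ext m; simp
  have hcore : ((Finset.Ico (0:ℤ) (L:ℤ)).filter (fun m => ∃ k, (b k:ℤ) ∣ m)).card
      ≤ ((Finset.Ico (0:ℤ) (L:ℤ)).filter (fun m => ∃ k, (b k:ℤ) ∣ m - r k)).card := by
    refine le_trans ?_ (le_trans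
      (core L hLpos K Finset.univ b (fun k _ => ⟨by have := hb k; omega, hdvd k⟩) r) ?_)
    · apply le_of_eq
      apply congrArg
      ext m
      simp
    · apply le_of_eq
      apply congrArg
      ext m
      simp
  have hLr : (0:ℝ) < L := by exact_mod_cast hLpos
  gcongr
end

section
/- Let B = {b₁, b₂, …} ⊆ {2,3,…} be infinite and pairwise coprime with Σ_{b∈B} 1/b < ∞, and let F_B = ℤ \ ⋃_{b∈B} bℤ. Then the natural density of F_B exists and equals d = ∏_{i=1}^∞ (1 − 1/b_i), and this equals the topological entropy of the B-admissible subshift X_B = {y ∈ {0,1}^ℤ : for every b ∈ B, the support of y occupies fewer than b residues mod b}. -/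
open Filter MeasureTheory

/-- The B-admissible (B-free) subshift: the support of y misses a residue class mod each b i. -/
def XB (b : ℕ → ℕ) : Set FullShift :=
  {y | ∀ i, ∃ r : ZMod (b i), ∀ m : ℤ, y m = 1 → (m : ZMod (b i)) ≠ r}

open Filter Finset



set_option maxHeartbeats 1000000 in
open Classical in
lemma key_count (b : ℕ → ℕ) (hb : ∀ i, 2 ≤ b i)
    (hcop : ∀ i j, i ≠ j → Nat.Coprime (b i) (b j)) :
    ∀ (S : Finset ℕ) (r : ∀ i : ℕ, ZMod (b i)) (c D N : ℕ),
      (∀ i ∈ S, Nat.Coprime D (b i)) →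
      |(((Finset.range N).filter
          (fun k => ∀ i ∈ S, ((c + D * k : ℕ) : ZMod (b i)) ≠ r i)).card : ℝ)
        - N * ∏ i ∈ S, (1 - 1 / (b i : ℝ))| ≤ 3 ^ (S.card + 1) := by
  intro S
  induction S using Finset.induction_on with
  | empty =>
      intro r c D N _
      simp
  | @insert t S ht IH =>
      intro r c D N hD
      have hbt : 2 ≤ b t := hb t
      haveI : NeZero (b t) := ⟨by omega⟩
      have hT0 : 0 < b t := by omega
      have hDt : Nat.Coprime D (b t) := hD t (mem_insert_self t S)
      have hDS : ∀ i ∈ S, Nat.Coprime D (b i) := fun i hi => hD i (mem_insert_of_mem hi)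
      set T := b t with hTdef
      set u : (ZMod (b t))ˣ := ZMod.unitOfCoprime D hDt with hu
      set w : ZMod (b t) := ((u⁻¹ : (ZMod (b t))ˣ) : ZMod (b t)) with hw
      have hDw : (D : ZMod (b t)) * w = 1 := by
        rw [hw, show ((D : ℕ) : ZMod (b t)) = (u : ZMod (b t)) from
          (ZMod.coe_unitOfCoprime D hDt).symm]
        exact u.mul_inv
      set v : ZMod (b t) := w * (r t - (c : ZMod (b t))) with hv
      set a := v.val with ha
      have haT : a < T := ZMod.val_lt v
      have hiff : ∀ k : ℕ, (((c + D * k : ℕ) : ZMod (b t)) = r t) ↔ (k : ZMod (b t)) = v := by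
        intro k
        push_cast
        constructor
        · intro h
          have h2 : (D : ZMod (b t)) * k = r t - (c : ZMod (b t)) := by rw [← h]; ring
          calc (k : ZMod (b t)) = ((D : ZMod (b t)) * w) * k := by rw [hDw]; ring
            _ = w * ((D : ZMod (b t)) * k) := by ring
            _ = v := by rw [h2, hv]
        · intro h
          rw [h, hv]
          have h2 : (D : ZMod (b t)) * (w * (r t - (c : ZMod (b t)))) =
              r t - (c : ZMod (b t)) := by
            rw [← mul_assoc, mul_comm (D : ZMod (b t)) w, mul_assoc, ← mul_assoc,
              mul_comm w (D : ZMod (b t)), hDw, one_mul]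
          linear_combination h2
      have hmodiff : ∀ k : ℕ, ((k : ZMod (b t)) = v ↔ k % T = a) := by
        intro k
        rw [← ZMod.natCast_zmod_val v, ZMod.natCast_eq_natCast_iff', Nat.mod_eq_of_lt haT]
      set P : ℕ → Prop := fun k => ∀ i ∈ S, ((c + D * k : ℕ) : ZMod (b i)) ≠ r i with hP
      have hsplit : (Finset.range N).filter
            (fun k => ∀ i ∈ insert t S, ((c + D * k : ℕ) : ZMod (b i)) ≠ r i)
          = ((Finset.range N).filter P) \
            ((Finset.range N).filter (fun k => P k ∧ (k : ZMod (b t)) = v)) := by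
        ext k
        simp only [mem_filter, Finset.mem_sdiff, Finset.forall_mem_insert, mem_range, ne_eq, hiff, hP]
        tauto
      have hsub : ((Finset.range N).filter (fun k => P k ∧ (k : ZMod (b t)) = v))
          ⊆ ((Finset.range N).filter P) :=
        Finset.monotone_filter_right _ (fun x _ hx => hx.1)
      set N' : ℕ := if a < N then (N - a - 1) / T + 1 else 0 with hN'def
      have hbij : ((Finset.range N).filter (fun k => P k ∧ (k : ZMod (b t)) = v)).card
          = ((Finset.range N').filter
              (fun j => ∀ i ∈ S, (((c + D * a) + (D * T) * j : ℕ) : ZMod (b i)) ≠ r i)).card := by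
        apply Finset.card_nbij' (i := fun k => k / T) (j := fun j => a + T * j)
        · intro k hk
          simp only [Finset.mem_coe, mem_filter, mem_range, hmodiff] at hk
          obtain ⟨hkN, hPk, hkmod⟩ := hk
          have hdm := Nat.div_add_mod k T
          have hkeq : a + T * (k / T) = k := by omega
          have haN : a < N := by omega
          simp only [Finset.mem_coe, mem_filter, mem_range, hN'def, if_pos haN]
          constructor
          · have h2 : k / T ≤ (N - a - 1) / T := by
              rw [Nat.le_div_iff_mul_le hT0, mul_comm]; omega
            omega
          · intro i hi
            have harg : c + D * a + D * T * (k / T) = c + D * k := by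
              conv_rhs => rw [← hkeq]
              ring
            rw [harg]
            exact hPk i hi
        · intro j hj
          simp only [Finset.mem_coe, mem_filter, mem_range, hN'def] at hj
          obtain ⟨hjN, hPj⟩ := hj
          have haN : a < N := by by_contra h; simp [if_neg h] at hjN
          rw [if_pos haN] at hjN
          have hjle : j ≤ (N - a - 1) / T := by omega
          have hTj : j * T ≤ N - a - 1 := (Nat.le_div_iff_mul_le hT0).mp hjle
          have hcm : T * j = j * T := Nat.mul_comm T j
          simp only [Finset.mem_coe, mem_filter, mem_range, hmodiff]
          refine ⟨by omega, ?_, ?_⟩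
          · intro i hi
            have harg : c + D * (a + T * j) = c + D * a + D * T * j := by ring
            rw [harg]
            exact hPj i hi
          · simp [Nat.add_mul_mod_self_left, Nat.mod_eq_of_lt haT]
        · intro k hk
          simp only [Finset.mem_coe, mem_filter, mem_range, hmodiff] at hk
          have := Nat.div_add_mod k T
          beta_reduce
          omega
        · intro j hj
          beta_reduce
          rw [Nat.add_mul_div_left _ _ hT0, Nat.div_eq_of_lt haT, zero_add]
      -- real bound on N'
      have hTR : (2 : ℝ) ≤ (T : ℝ) := by exact_mod_cast hbt
      have hTR0 : (0 : ℝ) < (T : ℝ) := by linarith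
      have hN'bound : |(N' : ℝ) - N / T| ≤ 1 := by
        by_cases haN : a < N
        · rw [hN'def, if_pos haN]
          set x := N - a - 1 with hx
          have hxc : (x : ℝ) = (N : ℝ) - a - 1 := by
            have h1 : a ≤ N := le_of_lt haN
            have h2 : 1 ≤ N - a := by omega
            rw [hx, Nat.cast_sub h2, Nat.cast_sub h1]
            push_cast; ring
          have h2 : (T : ℝ) * ((x / T : ℕ) : ℝ) + T > (x : ℝ) := by
            have hdm := Nat.div_add_mod x T
            have hml : x % T < T := Nat.mod_lt _ hT0
            have e1 : (T : ℝ) * ((x / T : ℕ) : ℝ) + ((x % T : ℕ) : ℝ) = (x : ℝ) := by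
              exact_mod_cast congrArg (Nat.cast : ℕ → ℝ) hdm
            have e2 : ((x % T : ℕ) : ℝ) < T := by exact_mod_cast hml
            linarith
          have haR : (a : ℝ) ≤ (T : ℝ) - 1 := by
            have : a + 1 ≤ T := haT
            have := (Nat.cast_le (α := ℝ)).mpr this
            push_cast at this; linarith
          have hqT : ((x / T : ℕ) : ℝ) * T ≤ (x : ℝ) := by
            exact_mod_cast (Nat.cast_le (α := ℝ)).mpr (Nat.div_mul_le_self x T)
          rw [abs_le]
          constructor
          · have hq : (N : ℝ) / T ≤ ((x / T : ℕ) : ℝ) + 2 := by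
              rw [div_le_iff₀ hTR0]
              nlinarith
            push_cast
            linarith
          · have hq : ((x / T : ℕ) : ℝ) ≤ (N : ℝ) / T := by
              rw [le_div_iff₀ hTR0]
              have hxN : (x : ℝ) ≤ N := by
                have h0 : (0 : ℝ) ≤ a := Nat.cast_nonneg a
                linarith [hxc]
              linarith
            push_cast
            linarith
        · rw [hN'def, if_neg haN]
          have hNa : (N : ℝ) ≤ a := by exact_mod_cast Nat.le_of_not_lt haN
          have haR : (a : ℝ) < T := by exact_mod_cast haT
          have h1 : (N : ℝ) / T ≤ 1 := by
            rw [div_le_one hTR0]; linarith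
          have h0 : (0 : ℝ) ≤ (N : ℝ) / T := by positivity
          rw [abs_le]
          constructor <;> push_cast <;> linarith
      -- assembly
      have hcard := Finset.card_sdiff_of_subset hsub
      have hc2le := Finset.card_le_card hsub
      have IH1 := IH r c D N hDS
      have hcop' : ∀ i ∈ S, Nat.Coprime (D * T) (b i) := fun i hi =>
        Nat.Coprime.mul (hDS i hi) (hcop t i (fun h => ht (h ▸ hi)))
      have IH2 := IH r (c + D * a) (D * T) N' hcop'
      rw [← hbij] at IH2
      set p := ∏ i ∈ S, (1 - 1 / (b i : ℝ)) with hpdef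
      have hfac : ∀ i ∈ S, (0 : ℝ) ≤ 1 - 1 / (b i : ℝ) ∧ (1 - 1 / (b i : ℝ)) ≤ 1 := by
        intro i hi
        have h2 : (2 : ℝ) ≤ (b i : ℝ) := by exact_mod_cast hb i
        have h3 : 1 / (b i : ℝ) ≤ 1 := by rw [div_le_one (by linarith)]; linarith
        have h4 : (0 : ℝ) ≤ 1 / (b i : ℝ) := by positivity
        constructor <;> linarith
      have hp0 : 0 ≤ p := Finset.prod_nonneg (fun i hi => (hfac i hi).1)
      have hp1 : p ≤ 1 := Finset.prod_le_one (fun i hi => (hfac i hi).1)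
        (fun i hi => (hfac i hi).2)
      rw [hsplit, Finset.prod_insert ht, Finset.card_insert_of_notMem ht, hcard]
      have hcast : ((((Finset.range N).filter P).card -
          ((Finset.range N).filter (fun k => P k ∧ (k : ZMod (b t)) = v)).card : ℕ) : ℝ)
          = (((Finset.range N).filter P).card : ℝ) -
            (((Finset.range N).filter (fun k => P k ∧ (k : ZMod (b t)) = v)).card : ℝ) :=
        Nat.cast_sub hc2le
      rw [hcast]
      set c1 : ℝ := (((Finset.range N).filter P).card : ℝ)
      set c2 : ℝ := ((((Finset.range N).filter (fun k => P k ∧ (k : ZMod (b t)) = v))).card : ℝ)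
      have key : c1 - c2 - N * ((1 - 1 / (T : ℝ)) * p)
          = (c1 - N * p) - (c2 - N' * p) - ((N' : ℝ) - N / T) * p := by
        ring
      have hpabs : |p| ≤ 1 := abs_le.mpr ⟨by linarith, hp1⟩
      have h3 : |((N' : ℝ) - N / T) * p| ≤ 1 := by
        rw [abs_mul]
        exact mul_le_one₀ hN'bound (abs_nonneg p) hpabs
      have hE1 : (1 : ℝ) ≤ 3 ^ (S.card + 1) := one_le_pow₀ (by norm_num)
      obtain ⟨hX1, hX2⟩ := abs_le.mp IH1
      obtain ⟨hY1, hY2⟩ := abs_le.mp IH2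
      obtain ⟨hZ1, hZ2⟩ := abs_le.mp h3
      rw [key, abs_le]
      have hpow : (3 : ℝ) ^ (S.card + 1 + 1) = 3 ^ (S.card + 1) * 3 :=
        pow_succ 3 (S.card + 1)
      constructor <;> rw [hpow] <;> linarith

lemma count_C (b : ℕ → ℕ) (hb : ∀ i, 2 ≤ b i)
    (hcop : ∀ i j, i ≠ j → Nat.Coprime (b i) (b j)) (K N : ℕ) :
    |(((Finset.range N).filter (fun k => ∀ i ∈ Finset.range K, ¬ b i ∣ k)).card : ℝ)
      - N * ∏ i ∈ Finset.range K, (1 - 1 / (b i : ℝ))| ≤ 3 ^ (K + 1) := by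
  have h := key_count b hb hcop (Finset.range K) (fun i => 0) 0 1 N
    (fun i _ => Nat.coprime_one_left _)
  rw [Finset.card_range] at h
  have hfe : (Finset.range N).filter (fun k => ∀ i ∈ Finset.range K, ¬ b i ∣ k)
      = (Finset.range N).filter
        (fun k => ∀ i ∈ Finset.range K, ((0 + 1 * k : ℕ) : ZMod (b i)) ≠ (0 : ZMod (b i))) := by
    ext k
    simp only [Finset.mem_filter]
    refine and_congr_right fun _ => forall₂_congr fun i _ => ?_
    rw [zero_add, one_mul, ne_eq, ZMod.natCast_eq_zero_iff]
  rw [hfe]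
  exact h

open Classical in
noncomputable def Acount (b : ℕ → ℕ) (n : ℕ) : ℕ :=
  ((Finset.range n).filter (fun k => 1 ≤ k ∧ ∀ i, ¬ b i ∣ k)).card

open Classical in
lemma A_le_C (b : ℕ → ℕ) (K n : ℕ) (hK : 1 ≤ K) :
    Acount b n ≤ ((Finset.range n).filter (fun k => ∀ i ∈ Finset.range K, ¬ b i ∣ k)).card := by
  apply Finset.card_le_card
  apply Finset.monotone_filter_right
  intro k _ hk i _
  exact hk.2 i

lemma b_inj (b : ℕ → ℕ) (hb : ∀ i, 2 ≤ b i)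
    (hcop : ∀ i j, i ≠ j → Nat.Coprime (b i) (b j)) : Function.Injective b := by
  intro i j hij
  by_contra hne
  have h := hcop i j hne
  rw [hij, Nat.Coprime, Nat.gcd_self] at h
  have := hb j
  omega

open Classical in
lemma C_le_A (b : ℕ → ℕ) (hb : ∀ i, 2 ≤ b i)
    (hcop : ∀ i j, i ≠ j → Nat.Coprime (b i) (b j))
    (hsum : Summable fun i => (1 : ℝ) / b i) (K n : ℕ) (hK : 1 ≤ K) :
    ((((Finset.range n).filter (fun k => ∀ i ∈ Finset.range K, ¬ b i ∣ k)).card : ℝ))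
      ≤ (Acount b n : ℝ) + n * ∑' j, (1 : ℝ) / b (j + K) := by
  classical
  set bad : Finset ℕ := (Finset.range n).filter (fun k => 1 ≤ k ∧ ∃ i, K ≤ i ∧ b i ∣ k)
    with hbad
  have hsubset : (Finset.range n).filter (fun k => ∀ i ∈ Finset.range K, ¬ b i ∣ k)
      ⊆ ((Finset.range n).filter (fun k => 1 ≤ k ∧ ∀ i, ¬ b i ∣ k)) ∪ bad := by
    intro k hk
    simp only [mem_filter, mem_range] at hk
    obtain ⟨hkn, hkP⟩ := hk
    have hk1 : 1 ≤ k := by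
      by_contra h
      have hk0 : k = 0 := by omega
      exact hkP 0 hK (by rw [hk0]; exact dvd_zero _)
    by_cases hall : ∀ i, ¬ b i ∣ k
    · exact Finset.mem_union_left _ (by simp [mem_filter, mem_range, hkn, hk1, hall])
    · push_neg at hall
      obtain ⟨i, hi⟩ := hall
      have hiK : K ≤ i := by
        by_contra h
        exact hkP i (by omega) hi
      exact Finset.mem_union_right _ (by
        simp only [hbad, mem_filter, mem_range]
        exact ⟨hkn, hk1, i, hiK, hi⟩)
  have hinj := b_inj b hb hcop
  set T : Finset ℕ := ((Finset.Icc 2 n).preimage b (hinj.injOn)).filter (fun i => K ≤ i)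
    with hT
  have hbadsub : bad ⊆ T.biUnion (fun i => (Finset.range n).filter (fun k => 1 ≤ k ∧ b i ∣ k)) := by
    intro k hk
    simp only [hbad, mem_filter, mem_range] at hk
    obtain ⟨hkn, hk1, i, hiK, hdvd⟩ := hk
    apply Finset.mem_biUnion.mpr
    refine ⟨i, ?_, ?_⟩
    · simp only [hT, mem_filter, Finset.mem_preimage, Finset.mem_Icc]
      have hle : b i ≤ k := Nat.le_of_dvd (by omega) hdvd
      exact ⟨⟨hb i, by omega⟩, hiK⟩
    · simp [mem_filter, mem_range, hkn, hk1, hdvd]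
  have hmult : ∀ i, (((Finset.range n).filter (fun k => 1 ≤ k ∧ b i ∣ k)).card : ℝ)
      ≤ (n : ℝ) / b i := by
    intro i
    have hbi : 0 < b i := by have := hb i; omega
    have hcard : ((Finset.range n).filter (fun k => 1 ≤ k ∧ b i ∣ k)).card
        ≤ (Finset.Icc 1 (n / b i)).card := by
      apply Finset.card_le_card_of_injOn (fun k => k / b i)
      · intro k hk
        simp only [Finset.mem_coe, mem_filter, mem_range] at hk
        obtain ⟨hkn, hk1, hdvd⟩ := hk
        simp only [Finset.mem_coe, Finset.mem_Icc]
        constructor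
        · rw [Nat.one_le_div_iff hbi]
          exact Nat.le_of_dvd (by omega) hdvd
        · exact Nat.div_le_div_right (by omega)
      · intro x hx y hy hxy
        simp only [Finset.coe_filter, Set.mem_setOf_eq, mem_range] at hx hy
        have hxy' : x / b i = y / b i := hxy
        rw [← Nat.div_mul_cancel hx.2.2, ← Nat.div_mul_cancel hy.2.2, hxy']
    calc (((Finset.range n).filter (fun k => 1 ≤ k ∧ b i ∣ k)).card : ℝ)
        ≤ ((Finset.Icc 1 (n / b i)).card : ℝ) := by exact_mod_cast hcard
      _ = ((n / b i : ℕ) : ℝ) := by rw [Nat.card_Icc]; simp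
      _ ≤ (n : ℝ) / b i := Nat.cast_div_le
  have hbadcard : ((bad.card : ℕ) : ℝ) ≤ (n : ℝ) * ∑' j, (1 : ℝ) / b (j + K) := by
    have h1 : (bad.card : ℝ) ≤ ∑ i ∈ T, (((Finset.range n).filter
        (fun k => 1 ≤ k ∧ b i ∣ k)).card : ℝ) := by
      have := Finset.card_le_card hbadsub
      have h2 := Finset.card_biUnion_le (s := T)
        (t := fun i => (Finset.range n).filter (fun k => 1 ≤ k ∧ b i ∣ k))
      have h3 : bad.card ≤ ∑ i ∈ T, ((Finset.range n).filter
          (fun k => 1 ≤ k ∧ b i ∣ k)).card := le_trans this h2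
      exact_mod_cast h3
    have h2 : ∑ i ∈ T, (((Finset.range n).filter
        (fun k => 1 ≤ k ∧ b i ∣ k)).card : ℝ) ≤ ∑ i ∈ T, (n : ℝ) / b i :=
      Finset.sum_le_sum (fun i _ => hmult i)
    have h3 : ∑ i ∈ T, (n : ℝ) / b i = (n : ℝ) * ∑ i ∈ T, (1 : ℝ) / b i := by
      rw [Finset.mul_sum]
      apply Finset.sum_congr rfl
      intro i _
      ring
    have hsum' : Summable (fun j => (1 : ℝ) / b (j + K)) :=
      (summable_nat_add_iff K).mpr hsum
    have h4 : ∑ i ∈ T, (1 : ℝ) / b i ≤ ∑' j, (1 : ℝ) / b (j + K) := by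
      have hTK : ∀ i ∈ T, K ≤ i := fun i hi => (Finset.mem_filter.mp hi).2
      have himg : ∑ i ∈ T, (1 : ℝ) / b i = ∑ j ∈ T.image (fun i => i - K), (1 : ℝ) / b (j + K) := by
        rw [Finset.sum_image]
        · apply Finset.sum_congr rfl
          intro i hi
          have hKi := hTK i hi
          have he : i - K + K = i := by omega
          rw [he]
        · intro x hx y hy hxy
          have := hTK x hx
          have := hTK y hy
          beta_reduce at hxy
          omega
      rw [himg]
      exact hsum'.sum_le_tsum _ (fun j _ => by positivity)
    have hn0 : (0 : ℝ) ≤ n := Nat.cast_nonneg n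
    calc (bad.card : ℝ) ≤ ∑ i ∈ T, (n : ℝ) / b i := le_trans h1 h2
      _ = (n : ℝ) * ∑ i ∈ T, (1 : ℝ) / b i := h3
      _ ≤ (n : ℝ) * ∑' j, (1 : ℝ) / b (j + K) := by
          apply mul_le_mul_of_nonneg_left h4 hn0
  have hcount : (((Finset.range n).filter (fun k => ∀ i ∈ Finset.range K, ¬ b i ∣ k)).card : ℝ)
      ≤ (Acount b n : ℝ) + (bad.card : ℝ) := by
    have h1 := Finset.card_le_card hsubset
    have h2 := Finset.card_union_le ((Finset.range n).filter
      (fun k => 1 ≤ k ∧ ∀ i, ¬ b i ∣ k)) bad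
    have : ((Finset.range n).filter (fun k => ∀ i ∈ Finset.range K, ¬ b i ∣ k)).card
        ≤ Acount b n + bad.card := le_trans h1 h2
    exact_mod_cast this
  linarith


section
variable (b : ℕ → ℕ) (hb : ∀ i, 2 ≤ b i)
  (hcop : ∀ i j, i ≠ j → Nat.Coprime (b i) (b j))
  (hsum : Summable fun i => (1 : ℝ) / b i)

-- facts about the factors
include hb in
lemma fac_mem (i : ℕ) : (0 : ℝ) ≤ 1 - 1 / (b i : ℝ) ∧ (1 - 1 / (b i : ℝ)) ≤ 1 := by
  have h2 : (2 : ℝ) ≤ (b i : ℝ) := by exact_mod_cast hb i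
  have h3 : 1 / (b i : ℝ) ≤ 1 := by rw [div_le_one (by linarith)]; linarith
  have h4 : (0 : ℝ) ≤ 1 / (b i : ℝ) := by positivity
  constructor <;> linarith

include hb in
lemma prod_tendsto :
    Tendsto (fun K => ∏ i ∈ Finset.range K, (1 - 1 / (b i : ℝ))) atTop
      (nhds (∏' i, (1 - 1 / (b i : ℝ)))) := by
  set f : ℕ → ℝ := fun i => 1 - 1 / (b i : ℝ) with hf
  have hanti : Antitone (fun s : Finset ℕ => ∏ i ∈ s, f i) := by
    intro s t hst
    have h1 : (∏ x ∈ t \ s, f x) * ∏ x ∈ s, f x = ∏ x ∈ t, f x := Finset.prod_sdiff hst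
    have h2 : (∏ x ∈ t \ s, f x) ≤ 1 :=
      Finset.prod_le_one (fun i _ => (fac_mem b hb i).1) (fun i _ => (fac_mem b hb i).2)
    have h3 : (0 : ℝ) ≤ ∏ x ∈ s, f x := Finset.prod_nonneg (fun i _ => (fac_mem b hb i).1)
    calc ∏ x ∈ t, f x = (∏ x ∈ t \ s, f x) * ∏ x ∈ s, f x := h1.symm
      _ ≤ 1 * ∏ x ∈ s, f x := mul_le_mul_of_nonneg_right h2 h3
      _ = ∏ x ∈ s, f x := one_mul _
  have hbdd : BddBelow (Set.range (fun s : Finset ℕ => ∏ i ∈ s, f i)) := by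
    refine ⟨0, ?_⟩
    rintro y ⟨s, rfl⟩
    exact Finset.prod_nonneg (fun i _ => (fac_mem b hb i).1)
  have hHP : HasProd f (⨅ s : Finset ℕ, ∏ i ∈ s, f i) := tendsto_atTop_ciInf hanti hbdd
  have hd : ∏' i, f i = ⨅ s : Finset ℕ, ∏ i ∈ s, f i := hHP.tprod_eq
  rw [hd]
  exact hHP.tendsto_prod_nat

include hb hcop hsum in
open Classical in
lemma hA_tendsto :
    Tendsto (fun n => ((Acount b n : ℝ)) / n) atTop
      (nhds (∏' i, (1 - 1 / (b i : ℝ)))) := by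
  set d := ∏' i, (1 - 1 / (b i : ℝ)) with hd
  rw [Metric.tendsto_atTop]
  intro ε hε
  -- choose K
  obtain ⟨K0, hK0⟩ := Metric.tendsto_atTop.mp (prod_tendsto b hb) (ε / 4) (by linarith)
  obtain ⟨K1, hK1⟩ := Metric.tendsto_atTop.mp
    (tendsto_sum_nat_add (f := fun i => (1 : ℝ) / b i)) (ε / 4) (by linarith)
  set K := max (max K0 K1) 1 with hK
  have hK1' : 1 ≤ K := le_max_right _ 1
  have hpK : |(∏ i ∈ Finset.range K, (1 - 1 / (b i : ℝ))) - d| < ε / 4 := by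
    have := hK0 K (le_trans (le_max_left K0 K1) (le_max_left _ 1))
    rwa [Real.dist_eq] at this
  have htail : ∑' j, (1 : ℝ) / b (j + K) < ε / 4 := by
    have h := hK1 K (le_trans (le_max_right K0 K1) (le_max_left _ 1))
    rw [Real.dist_eq, sub_zero] at h
    calc ∑' j, (1 : ℝ) / b (j + K) ≤ |∑' j, (1 : ℝ) / b (j + K)| := le_abs_self _
      _ < ε / 4 := h
  have htail0 : 0 ≤ ∑' j, (1 : ℝ) / b (j + K) :=
    tsum_nonneg (fun j => by positivity)
  set E : ℝ := 3 ^ (K + 1) with hE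
  have hE0 : (0 : ℝ) < E := by positivity
  obtain ⟨N0, hN0⟩ := exists_nat_gt (4 * E / ε)
  refine ⟨max N0 1, fun n hn => ?_⟩
  have hn1 : 1 ≤ n := le_trans (le_max_right N0 1) hn
  have hnN0 : (N0 : ℝ) ≤ n := by exact_mod_cast le_trans (le_max_left N0 1) hn
  have hnR : (0 : ℝ) < n := by exact_mod_cast hn1
  have hEn : E / n < ε / 4 := by
    rw [div_lt_iff₀ hnR]
    have h1 : 4 * E / ε < n := lt_of_lt_of_le hN0 hnN0
    rw [div_lt_iff₀ hε] at h1
    linarith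
  set p := ∏ i ∈ Finset.range K, (1 - 1 / (b i : ℝ)) with hp
  have hup : (Acount b n : ℝ) ≤ n * p + E := by
    have h1 : (Acount b n : ℝ) ≤
        (((Finset.range n).filter (fun k => ∀ i ∈ Finset.range K, ¬ b i ∣ k)).card : ℝ) := by
      exact_mod_cast A_le_C b K n hK1'
    have h2 := count_C b hb hcop K n
    have h3 := (abs_le.mp h2).2
    linarith
  have hlo : n * p - E - n * ∑' j, (1 : ℝ) / b (j + K) ≤ (Acount b n : ℝ) := by
    have h1 := C_le_A b hb hcop hsum K n hK1'
    have h2 := count_C b hb hcop K n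
    have h3 := (abs_le.mp h2).1
    linarith
  rw [Real.dist_eq]
  have hAd : |(Acount b n : ℝ) / n - p| ≤ E / n + ∑' j, (1 : ℝ) / b (j + K) := by
    have h1 : (Acount b n : ℝ) / n ≤ p + E / n := by
      rw [div_le_iff₀ hnR, add_mul, div_mul_cancel₀ _ (ne_of_gt hnR)]
      linarith [hup]
    have h2 : p - E / n - ∑' j, (1 : ℝ) / b (j + K) ≤ (Acount b n : ℝ) / n := by
      rw [le_div_iff₀ hnR, sub_mul, sub_mul, div_mul_cancel₀ _ (ne_of_gt hnR)]
      linarith [hlo]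
    rw [abs_le]
    constructor <;> linarith
  calc |(Acount b n : ℝ) / n - d|
      ≤ |(Acount b n : ℝ) / n - p| + |p - d| := abs_sub_le _ _ _
    _ < (E / n + ∑' j, (1 : ℝ) / b (j + K)) + ε / 4 := by
        apply add_lt_add_of_le_of_lt hAd hpK
    _ < ε := by linarith

end

-- ===== auxiliary =====

lemma fin2_ne_one {x : Fin 2} (h : x ≠ 1) : x = 0 := by
  revert h; revert x; decide

open Classical in
lemma adm_iff (b : ℕ → ℕ) {n : ℕ} (W : Fin n → Fin 2) :
    (XB b ∩ cylinder W).Nonempty ↔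
      ∀ i, ∃ r : ZMod (b i), ∀ m : Fin n, W m = 1 → (((m : ℕ) : ZMod (b i))) ≠ r := by
  constructor
  · rintro ⟨y, hy, hcyl⟩ i
    obtain ⟨r, hr⟩ := hy i
    refine ⟨r, fun m hm => ?_⟩
    have h1 : y (((m : ℕ) : ℤ)) = 1 := by rw [hcyl m]; exact hm
    have h2 := hr ((m : ℕ) : ℤ) h1
    rwa [Int.cast_natCast] at h2
  · intro h
    set y : FullShift := fun k =>
      if (∃ m : Fin n, ((m : ℕ) : ℤ) = k ∧ W m = 1) then 1 else 0 with hy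
    refine ⟨y, ?_, ?_⟩
    · intro i
      obtain ⟨r, hr⟩ := h i
      refine ⟨r, fun k hk => ?_⟩
      by_cases hc : ∃ m : Fin n, ((m : ℕ) : ℤ) = k ∧ W m = 1
      · obtain ⟨m, hmk, hm1⟩ := hc
        rw [← hmk, Int.cast_natCast]
        exact hr m hm1
      · rw [hy] at hk
        simp only [hc, if_false] at hk
        exact absurd hk (by decide)
    · intro m
      by_cases hm : W m = 1
      · rw [hy]
        simp only
        rw [if_pos ⟨m, rfl, hm⟩, hm]
      · have hm0 : W m = 0 := fin2_ne_one hm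
        rw [hy]
        simp only
        rw [if_neg, hm0]
        rintro ⟨m', hm'k, hm'1⟩
        have : m' = m := by
          apply Fin.ext
          exact_mod_cast hm'k
        rw [this] at hm'1
        exact hm hm'1

open Classical in
lemma card_supp (n : ℕ) (G : Finset (Fin n)) :
    (Finset.univ.filter (fun W : Fin n → Fin 2 => ∀ m, W m = 1 → m ∈ G)).card = 2 ^ G.card := by
  have h2 : 2 ^ G.card = (Finset.univ : Finset ({ x // x ∈ G } → Fin 2)).card := by
    rw [Finset.card_univ, Fintype.card_fun]
    simp [Fintype.card_coe]
  rw [h2]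
  refine Finset.card_nbij' (i := fun W => fun g : { x // x ∈ G } => W g)
    (j := fun f => fun m => if h : m ∈ G then f ⟨m, h⟩ else 0) ?_ ?_ ?_ ?_
  · intro W _
    exact Finset.mem_univ _
  · intro f _
    simp only [Finset.mem_coe, Finset.mem_filter, Finset.mem_univ, true_and]
    intro m hm
    by_contra hmG
    rw [dif_neg hmG] at hm
    exact absurd hm (by decide)
  · intro W hW
    simp only [Finset.mem_coe, Finset.mem_filter, Finset.mem_univ, true_and] at hW
    funext m
    by_cases h : m ∈ G
    · simp only [dif_pos h]
    · simp only [dif_neg h]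
      by_contra hne
      have h1 : W m = 1 := by
        by_contra h1
        exact hne (fin2_ne_one h1).symm
      exact h (hW m h1)
  · intro f _
    funext g
    simp only [dif_pos g.2]


open Classical in
lemma cardZ_eq (b : ℕ → ℕ) (N : ℕ) :
    ((Finset.Icc (1 : ℤ) (N : ℤ)).filter (fun m => ∀ i, ¬ ((b i : ℤ) ∣ m))).card
      = Acount b (N + 1) := by
  rw [Acount]
  refine Finset.card_nbij' (i := fun m => m.toNat) (j := fun k => (k : ℤ)) ?_ ?_ ?_ ?_
  · intro m hm
    simp only [Finset.mem_coe, Finset.mem_filter, Finset.mem_Icc] at hm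
    obtain ⟨⟨h1, h2⟩, hP⟩ := hm
    simp only [Finset.mem_coe, Finset.mem_filter, Finset.mem_range]
    refine ⟨by omega, by omega, fun i hdvd => ?_⟩
    apply hP i
    have he : ((m.toNat : ℤ)) = m := Int.toNat_of_nonneg (by omega)
    rw [← he]
    exact_mod_cast hdvd
  · intro k hk
    simp only [Finset.mem_coe, Finset.mem_filter, Finset.mem_range] at hk
    obtain ⟨h1, h2, hP⟩ := hk
    simp only [Finset.mem_coe, Finset.mem_filter, Finset.mem_Icc]
    refine ⟨⟨by exact_mod_cast h2, by exact_mod_cast (by omega : k ≤ N)⟩, fun i hdvd => ?_⟩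
    apply hP i
    exact_mod_cast hdvd
  · intro m hm
    simp only [Finset.mem_coe, Finset.mem_filter, Finset.mem_Icc] at hm
    exact Int.toNat_of_nonneg (by omega)
  · intro k _
    exact Int.toNat_natCast k

open Classical in
lemma lower_bound (b : ℕ → ℕ) (hb : ∀ i, 2 ≤ b i) (n : ℕ) :
    2 ^ (Acount b n) ≤ (Finset.univ.filter (fun W : Fin n → Fin 2 =>
      ∀ i, ∃ r : ZMod (b i), ∀ m : Fin n, W m = 1 → (((m : ℕ) : ZMod (b i))) ≠ r)).card := by
  set Pn : Finset (Fin n) :=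
    Finset.univ.filter (fun m : Fin n => 1 ≤ (m : ℕ) ∧ ∀ i, ¬ b i ∣ (m : ℕ)) with hPn
  have h1 : Pn.card = Acount b n := by
    rw [Acount]
    refine Finset.card_nbij (fun m : Fin n => (m : ℕ)) ?_ ?_ ?_
    · intro m hm
      simp only [hPn, Finset.mem_coe, Finset.mem_filter, Finset.mem_univ, true_and] at hm
      simp only [Finset.mem_coe, Finset.mem_filter, Finset.mem_range]
      exact ⟨m.isLt, hm⟩
    · intro x _ y _ hxy
      exact Fin.ext hxy
    · intro k hk
      simp only [Finset.mem_coe, Finset.mem_filter, Finset.mem_range] at hk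
      refine ⟨⟨k, hk.1⟩, ?_, rfl⟩
      simp only [hPn, Finset.mem_coe, Finset.mem_filter, Finset.mem_univ, true_and]
      exact hk.2
  have h2 : Finset.univ.filter (fun W : Fin n → Fin 2 => ∀ m, W m = 1 → m ∈ Pn)
      ⊆ Finset.univ.filter (fun W : Fin n → Fin 2 =>
        ∀ i, ∃ r : ZMod (b i), ∀ m : Fin n, W m = 1 → (((m : ℕ) : ZMod (b i))) ≠ r) := by
    intro W hW
    simp only [Finset.mem_filter, Finset.mem_univ, true_and] at hW ⊢
    intro i
    refine ⟨0, fun m hm => ?_⟩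
    have hmP := hW m hm
    simp only [hPn, Finset.mem_filter, Finset.mem_univ, true_and] at hmP
    rw [ne_eq, ZMod.natCast_eq_zero_iff]
    exact hmP.2 i
  calc 2 ^ (Acount b n) = 2 ^ Pn.card := by rw [h1]
    _ = (Finset.univ.filter (fun W : Fin n → Fin 2 => ∀ m, W m = 1 → m ∈ Pn)).card :=
        (card_supp n Pn).symm
    _ ≤ _ := Finset.card_le_card h2

open Classical in
lemma upper_bound (b : ℕ → ℕ) (hb : ∀ i, 2 ≤ b i)
    (hcop : ∀ i j, i ≠ j → Nat.Coprime (b i) (b j)) (K n : ℕ) :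
    (((Finset.univ.filter (fun W : Fin n → Fin 2 =>
      ∀ i, ∃ r : ZMod (b i), ∀ m : Fin n, W m = 1 → (((m : ℕ) : ZMod (b i))) ≠ r)).card : ℝ))
      ≤ (∏ i ∈ Finset.range K, (b i : ℝ)) *
        (2 : ℝ) ^ ((n : ℝ) * ∏ i ∈ Finset.range K, (1 - 1 / (b i : ℝ)) + 3 ^ (K + 1)) := by
  haveI : ∀ i, NeZero (b i) := fun i => ⟨by have := hb i; omega⟩
  set Good : (∀ i : Fin K, ZMod (b (i : ℕ))) → Finset (Fin n) := fun ρ =>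
    Finset.univ.filter (fun m : Fin n => ∀ i : Fin K, (((m : ℕ) : ZMod (b (i : ℕ)))) ≠ ρ i)
    with hGood
  have hcover : Finset.univ.filter (fun W : Fin n → Fin 2 =>
        ∀ i, ∃ r : ZMod (b i), ∀ m : Fin n, W m = 1 → (((m : ℕ) : ZMod (b i))) ≠ r)
      ⊆ (Finset.univ : Finset (∀ i : Fin K, ZMod (b (i : ℕ)))).biUnion
          (fun ρ => Finset.univ.filter (fun W : Fin n → Fin 2 =>
            ∀ m : Fin n, W m = 1 → m ∈ Good ρ)) := by
    intro W hW
    simp only [Finset.mem_filter, Finset.mem_univ, true_and] at hW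
    apply Finset.mem_biUnion.mpr
    refine ⟨fun i => Classical.choose (hW (i : ℕ)), Finset.mem_univ _, ?_⟩
    simp only [Finset.mem_filter, Finset.mem_univ, true_and]
    intro m hm
    simp only [hGood, Finset.mem_filter, Finset.mem_univ, true_and]
    intro i
    exact Classical.choose_spec (hW (i : ℕ)) m hm
  have hGoodCard : ∀ ρ, ((Good ρ).card : ℝ)
      ≤ (n : ℝ) * ∏ i ∈ Finset.range K, (1 - 1 / (b i : ℝ)) + 3 ^ (K + 1) := by
    intro ρ
    set r' : ∀ i : ℕ, ZMod (b i) := fun i => if h : i < K then ρ ⟨i, h⟩ else 0 with hr'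
    have hkey := key_count b hb hcop (Finset.range K) r' 0 1 n
      (fun i _ => Nat.coprime_one_left _)
    rw [Finset.card_range] at hkey
    have h6 := (abs_le.mp hkey).2
    have h7 : ((Good ρ).card : ℝ)
        - (n : ℝ) * ∏ i ∈ Finset.range K, (1 - 1 / (b i : ℝ)) ≤ 3 ^ (K + 1) := by
      convert h6 using 3
      · rfl
      refine Finset.card_nbij (fun m : Fin n => (m : ℕ)) ?_ ?_ ?_
      · intro m hm
        simp only [hGood, Finset.mem_coe, Finset.mem_filter, Finset.mem_univ, true_and] at hm
        simp only [Finset.mem_coe, Finset.mem_filter, Finset.mem_range]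
        refine ⟨m.isLt, fun i hi => ?_⟩
        have hiK : i < K := hi
        simp only [hr', zero_add, one_mul]
        rw [dif_pos hiK]
        exact hm ⟨i, hiK⟩
      · intro x _ y _ hxy
        exact Fin.ext hxy
      · intro k hk
        simp only [Finset.mem_coe, Finset.mem_filter, Finset.mem_range] at hk
        refine ⟨⟨k, hk.1⟩, ?_, rfl⟩
        simp only [hGood, Finset.mem_coe, Finset.mem_filter, Finset.mem_univ, true_and]
        intro i
        have h8 := hk.2 (i : ℕ) i.isLt
        simp only [hr', zero_add, one_mul] at h8
        rw [dif_pos i.isLt] at h8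
        exact h8
    linarith
  have h2 : ((Finset.univ.filter (fun W : Fin n → Fin 2 =>
        ∀ i, ∃ r : ZMod (b i), ∀ m : Fin n, W m = 1 → (((m : ℕ) : ZMod (b i))) ≠ r)).card : ℝ)
      ≤ ∑ ρ : (∀ i : Fin K, ZMod (b (i : ℕ))), ((2 : ℕ) ^ (Good ρ).card : ℝ) := by
    have hc1 := Finset.card_le_card hcover
    have hc2 := Finset.card_biUnion_le
      (s := (Finset.univ : Finset (∀ i : Fin K, ZMod (b (i : ℕ)))))
      (t := fun ρ => Finset.univ.filter (fun W : Fin n → Fin 2 =>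
        ∀ m : Fin n, W m = 1 → m ∈ Good ρ))
    have hc3 : ∀ ρ, (Finset.univ.filter (fun W : Fin n → Fin 2 =>
        ∀ m : Fin n, W m = 1 → m ∈ Good ρ)).card = 2 ^ (Good ρ).card :=
      fun ρ => card_supp n (Good ρ)
    have : (Finset.univ.filter (fun W : Fin n → Fin 2 =>
        ∀ i, ∃ r : ZMod (b i), ∀ m : Fin n, W m = 1 → (((m : ℕ) : ZMod (b i))) ≠ r)).card
        ≤ ∑ ρ : (∀ i : Fin K, ZMod (b (i : ℕ))), 2 ^ (Good ρ).card := by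
      calc _ ≤ _ := le_trans hc1 hc2
        _ = ∑ ρ : (∀ i : Fin K, ZMod (b (i : ℕ))), 2 ^ (Good ρ).card :=
          Finset.sum_congr rfl (fun ρ _ => hc3 ρ)
    exact_mod_cast this
  have h3 : ∀ ρ : (∀ i : Fin K, ZMod (b (i : ℕ))), ((2 : ℕ) ^ (Good ρ).card : ℝ)
      ≤ (2 : ℝ) ^ ((n : ℝ) * ∏ i ∈ Finset.range K, (1 - 1 / (b i : ℝ)) + 3 ^ (K + 1)) := by
    intro ρ
    have : ((2 : ℕ) ^ (Good ρ).card : ℝ) = (2 : ℝ) ^ (((Good ρ).card : ℕ) : ℝ) := by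
      rw [Real.rpow_natCast]
      push_cast
      ring
    rw [this]
    exact Real.rpow_le_rpow_of_exponent_le one_le_two (hGoodCard ρ)
  have h4 : ∑ ρ : (∀ i : Fin K, ZMod (b (i : ℕ))), ((2 : ℕ) ^ (Good ρ).card : ℝ)
      ≤ (Fintype.card (∀ i : Fin K, ZMod (b (i : ℕ))) : ℝ) *
        (2 : ℝ) ^ ((n : ℝ) * ∏ i ∈ Finset.range K, (1 - 1 / (b i : ℝ)) + 3 ^ (K + 1)) := by
    calc ∑ ρ : (∀ i : Fin K, ZMod (b (i : ℕ))), ((2 : ℕ) ^ (Good ρ).card : ℝ)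
        ≤ ∑ _ρ : (∀ i : Fin K, ZMod (b (i : ℕ))),
            (2 : ℝ) ^ ((n : ℝ) * ∏ i ∈ Finset.range K, (1 - 1 / (b i : ℝ)) + 3 ^ (K + 1)) :=
          Finset.sum_le_sum (fun ρ _ => h3 ρ)
      _ = _ := by rw [Finset.sum_const, Finset.card_univ, nsmul_eq_mul]
  have h5 : (Fintype.card (∀ i : Fin K, ZMod (b (i : ℕ))) : ℝ)
      = ∏ i ∈ Finset.range K, (b i : ℝ) := by
    rw [Fintype.card_pi]
    push_cast
    rw [← Fin.prod_univ_eq_prod_range (fun i => (b i : ℝ)) K]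
    apply Finset.prod_congr rfl
    intro i _
    rw [ZMod.card]
  linarith [le_trans h2 h4, h5 ▸ le_trans h2 h4]

open Classical in
theorem stmt11 (b : ℕ → ℕ) (hb : ∀ i, 2 ≤ b i)
    (hcop : ∀ i j, i ≠ j → Nat.Coprime (b i) (b j))
    (hsum : Summable fun i => (1 : ℝ) / b i) :
    Tendsto (fun N : ℕ =>
        (((Finset.Icc (1 : ℤ) N).filter fun m => ∀ i, ¬ ((b i : ℤ) ∣ m)).card : ℝ) / N)
      atTop (nhds (∏' i, (1 - 1 / (b i : ℝ)))) ∧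
    Tendsto (fun n : ℕ =>
        Real.logb 2
          ((Finset.univ.filter fun W : Fin n → Fin 2 => (XB b ∩ cylinder W).Nonempty).card) / n)
      atTop (nhds (∏' i, (1 - 1 / (b i : ℝ)))) := by
  have hA := hA_tendsto b hb hcop hsum
  have hprod := prod_tendsto b hb
  constructor
  · -- Part 1: natural density
    have h1 : Tendsto (fun N : ℕ => (Acount b (N + 1) : ℝ) / ((N + 1 : ℕ) : ℝ)) atTop
        (nhds (∏' i, (1 - 1 / (b i : ℝ)))) := hA.comp (tendsto_add_atTop_nat 1)
    have h2 : Tendsto (fun N : ℕ => ((N + 1 : ℕ) : ℝ) / (N : ℝ)) atTop (nhds 1) := by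
      have h3 : Tendsto (fun N : ℕ => 1 + 1 / (N : ℝ)) atTop (nhds 1) := by
        have h4 := (tendsto_const_nhds (x := (1 : ℝ)) (f := atTop (α := ℕ))).add
          tendsto_one_div_atTop_nhds_zero_nat
        simpa using h4
      apply h3.congr'
      filter_upwards [eventually_ge_atTop 1] with N hN
      have hN0 : (N : ℝ) ≠ 0 := by
        have : (0 : ℝ) < N := by exact_mod_cast hN
        linarith
      push_cast
      field_simp
    have h3 := h1.mul h2
    rw [mul_one] at h3
    apply h3.congr'
    filter_upwards [eventually_ge_atTop 1] with N hN
    have hN0 : (N : ℝ) ≠ 0 := by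
      have : (0 : ℝ) < N := by exact_mod_cast hN
      linarith
    have hN10 : ((N + 1 : ℕ) : ℝ) ≠ 0 := by positivity
    rw [cardZ_eq b N]
    field_simp
  · -- Part 2: entropy
    haveI : ∀ i, NeZero (b i) := fun i => ⟨by have := hb i; omega⟩
    set d := ∏' i, (1 - 1 / (b i : ℝ)) with hd
    set c2 : (n : ℕ) → ℕ := fun n => (Finset.univ.filter (fun W : Fin n → Fin 2 =>
        ∀ i, ∃ r : ZMod (b i), ∀ m : Fin n, W m = 1 → (((m : ℕ) : ZMod (b i))) ≠ r)).card
      with hc2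
    have hgoal : ∀ n : ℕ,
        ((Finset.univ.filter fun W : Fin n → Fin 2 => (XB b ∩ cylinder W).Nonempty).card) = c2 n := by
      intro n
      rw [hc2]
      congr 1
      ext W
      simp only [Finset.mem_filter, Finset.mem_univ, true_and]
      exact adm_iff b W
    have hc2pos : ∀ n, 1 ≤ c2 n := by
      intro n
      rw [hc2]
      apply Finset.card_pos.mpr
      refine ⟨fun _ => 0, ?_⟩
      simp only [Finset.mem_filter, Finset.mem_univ, true_and]
      intro i
      exact ⟨0, fun m hm => absurd hm (by decide)⟩
    have hc2posR : ∀ n, (0 : ℝ) < (c2 n : ℝ) := by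
      intro n
      have := hc2pos n
      exact_mod_cast Nat.lt_of_lt_of_le Nat.zero_lt_one this
    have hlow : ∀ n, (Acount b n : ℝ) ≤ Real.logb 2 (c2 n) := by
      intro n
      have h1 := lower_bound b hb n
      have h2 : ((2 : ℝ)) ^ (Acount b n) ≤ (c2 n : ℝ) := by
        rw [hc2]
        exact_mod_cast h1
      have h3 : Real.logb 2 ((2 : ℝ) ^ (Acount b n)) ≤ Real.logb 2 (c2 n) :=
        Real.logb_le_logb_of_le one_lt_two (by positivity) h2
      rwa [Real.logb_pow, Real.logb_self_eq_one one_lt_two, mul_one] at h3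
    have hupper : ∀ K n : ℕ, Real.logb 2 (c2 n) ≤
        Real.logb 2 (∏ i ∈ Finset.range K, (b i : ℝ)) +
          ((n : ℝ) * ∏ i ∈ Finset.range K, (1 - 1 / (b i : ℝ)) + 3 ^ (K + 1)) := by
      intro K n
      have h1 := upper_bound b hb hcop K n
      have hBpos : (0 : ℝ) < ∏ i ∈ Finset.range K, (b i : ℝ) :=
        Finset.prod_pos (fun i _ => by
          have := hb i
          have : (2 : ℝ) ≤ (b i : ℝ) := by exact_mod_cast this
          linarith)
      have h1' : (c2 n : ℝ) ≤ (∏ i ∈ Finset.range K, (b i : ℝ)) *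
          (2 : ℝ) ^ ((n : ℝ) * ∏ i ∈ Finset.range K, (1 - 1 / (b i : ℝ)) + 3 ^ (K + 1)) := by
        rw [hc2]
        exact h1
      calc Real.logb 2 (c2 n) ≤ Real.logb 2 ((∏ i ∈ Finset.range K, (b i : ℝ)) *
            (2 : ℝ) ^ ((n : ℝ) * ∏ i ∈ Finset.range K, (1 - 1 / (b i : ℝ)) + 3 ^ (K + 1))) :=
          Real.logb_le_logb_of_le one_lt_two (hc2posR n) h1'
        _ = Real.logb 2 (∏ i ∈ Finset.range K, (b i : ℝ)) +
            Real.logb 2 ((2 : ℝ) ^ ((n : ℝ) * ∏ i ∈ Finset.range K, (1 - 1 / (b i : ℝ))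
              + 3 ^ (K + 1))) :=
          Real.logb_mul (ne_of_gt hBpos) (by positivity)
        _ = _ := by
          rw [Real.logb_rpow (by norm_num : (0:ℝ) < 2) (by norm_num : (2:ℝ) ≠ 1)]
    -- final ε-argument
    rw [Metric.tendsto_atTop]
    intro ε hε
    obtain ⟨K0, hK0⟩ := Metric.tendsto_atTop.mp hprod (ε / 2) (by linarith)
    set K := K0 with hK
    have hpK : ∏ i ∈ Finset.range K, (1 - 1 / (b i : ℝ)) < d + ε / 2 := by
      have := hK0 K le_rfl
      rw [Real.dist_eq] at this
      have := (abs_lt.mp this).2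
      linarith
    set C : ℝ := Real.logb 2 (∏ i ∈ Finset.range K, (b i : ℝ)) + 3 ^ (K + 1) with hC
    have hBone : (1 : ℝ) ≤ ∏ i ∈ Finset.range K, (b i : ℝ) := by
      have h3 := Finset.prod_le_prod (s := Finset.range K) (f := fun _ => (1 : ℝ))
        (g := fun i => (b i : ℝ)) (fun i _ => zero_le_one) (fun i _ => by
          show (1 : ℝ) ≤ (b i : ℝ)
          have h2 : (2 : ℝ) ≤ (b i : ℝ) := by exact_mod_cast hb i
          linarith)
      simpa using h3
    have hC0 : 0 ≤ C := by
      have h1 : 0 ≤ Real.logb 2 (∏ i ∈ Finset.range K, (b i : ℝ)) :=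
        Real.logb_nonneg one_lt_two hBone
      have h2 : (0 : ℝ) ≤ 3 ^ (K + 1) := by positivity
      rw [hC]; linarith
    obtain ⟨N1, hN1⟩ := Metric.tendsto_atTop.mp hA (ε / 2) (by linarith)
    obtain ⟨N2, hN2⟩ := exists_nat_gt (2 * C / ε)
    refine ⟨max (max N1 N2) 1, fun n hn => ?_⟩
    have hn1 : 1 ≤ n := le_trans (le_max_right _ 1) hn
    have hnN1 : N1 ≤ n := le_trans (le_trans (le_max_left N1 N2) (le_max_left _ 1)) hn
    have hnN2 : (N2 : ℝ) ≤ n := by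
      exact_mod_cast le_trans (le_trans (le_max_right N1 N2) (le_max_left _ 1)) hn
    have hnR : (0 : ℝ) < n := by exact_mod_cast hn1
    have hCn : C / n < ε / 2 := by
      rw [div_lt_iff₀ hnR]
      have h1 : 2 * C / ε < n := lt_of_lt_of_le hN2 hnN2
      rw [div_lt_iff₀ hε] at h1
      linarith
    have hAn : d - ε / 2 < (Acount b n : ℝ) / n := by
      have := hN1 n hnN1
      rw [Real.dist_eq] at this
      have := (abs_lt.mp this).1
      linarith
    rw [Real.dist_eq, hgoal n]
    have hup2 : Real.logb 2 (c2 n) / n ≤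
        ∏ i ∈ Finset.range K, (1 - 1 / (b i : ℝ)) + C / n := by
      rw [div_le_iff₀ hnR, add_mul, div_mul_cancel₀ _ (ne_of_gt hnR)]
      have := hupper K n
      rw [hC] at *
      nlinarith [hupper K n]
    have hlo2 : (Acount b n : ℝ) / n ≤ Real.logb 2 (c2 n) / n := by
      exact div_le_div_of_nonneg_right (hlow n) hnR.le
    rw [abs_lt]
    constructor
    · have h1 : d - ε < (Acount b n : ℝ) / n := by linarith
      linarith [hlo2]
    · have h1 : Real.logb 2 (c2 n) / n < d + ε := by
        have := hup2
        linarith [hpK, hCn]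
      linarith
end
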